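/- arXiv:1403.2675 — 8 statements merged into one kernel-verified Lean document; each statement's English description precedes it below -/
import Mathlib

section
/- Let F be a finite abelian subgroup of PU(n) such that the only X ∈ su(n) satisfying AXA⁻¹ = X for every A ∈ U(n) representing an element of F is X = 0. Then the commutator pairing m on F is nondegenerate: if x ∈ F satisfies m(x,y) = 1 for all y ∈ F, then x = 1. -/
open Matrix

noncomputable section

/-- The unitary group `U(ι)` of complex unitary matrices indexed by `ι`. -/
abbrev UG (ι : Type) [Fintype ι] [DecidableEq ι] := Matrix.unitaryGroup ι ℂ

variable (ι : Type) [Fintype ι] [DecidableEq ι]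

/-- The central subgroup `Z_n = {λ I : |λ| = 1}` of scalar unitary matrices. -/
def scalarSG : Subgroup (UG ι) where
  carrier := {A | ∃ c : ℂ, ‖c‖ = 1 ∧ (A : Matrix ι ι ℂ) = c • (1 : Matrix ι ι ℂ)}
  one_mem' := ⟨1, by simp, by simp⟩
  mul_mem' := by
    rintro A B ⟨a, ha, hA⟩ ⟨b, hb, hB⟩
    exact ⟨a * b, by simp [ha, hb], by
      simp only [Matrix.UnitaryGroup.mul_val, hA, hB, smul_mul_smul_comm, mul_one]⟩
  inv_mem' := by
    rintro A ⟨a, ha, hA⟩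
    refine ⟨star a, by simpa using ha, ?_⟩
    have : ((A⁻¹ : UG ι) : Matrix ι ι ℂ) = star (A : Matrix ι ι ℂ) :=
      Matrix.UnitaryGroup.inv_val A
    rw [this, hA]
    simp [Matrix.star_eq_conjTranspose, Matrix.conjTranspose_smul]

instance scalarSG_normal : (scalarSG ι).Normal := by
  constructor
  rintro A ⟨a, ha, hA⟩ g
  refine ⟨a, ha, ?_⟩
  have h1 : ((g * A * g⁻¹ : UG ι) : Matrix ι ι ℂ)
      = (g : Matrix ι ι ℂ) * (A : Matrix ι ι ℂ) * ((g⁻¹ : UG ι) : Matrix ι ι ℂ) := rfl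
  rw [h1, hA]
  have h2 : (g : Matrix ι ι ℂ) * ((g⁻¹ : UG ι) : Matrix ι ι ℂ) = 1 := by
    have := Matrix.UnitaryGroup.mul_val g g⁻¹
    rw [mul_inv_cancel] at this
    simpa using this.symm
  calc (g : Matrix ι ι ℂ) * (a • (1 : Matrix ι ι ℂ)) * ((g⁻¹ : UG ι) : Matrix ι ι ℂ)
      = a • ((g : Matrix ι ι ℂ) * ((g⁻¹ : UG ι) : Matrix ι ι ℂ)) := by
        simp [mul_smul_comm, smul_mul_assoc]
    _ = a • (1 : Matrix ι ι ℂ) := by rw [h2]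

/-- The projective unitary group `PU(ι) = U(ι)/Z`. -/
abbrev PU := UG ι ⧸ scalarSG ι


/-- If `F` is a finite abelian subgroup of `PU(n)` such that the only
`X ∈ su(n)` fixed by conjugation by every representative of every element of `F` is `X = 0`,
then the commutator pairing on `F` is nondegenerate. -/
theorem commutator_pairing_nondegenerate (n : ℕ) (hn : 1 ≤ n)
    (F : Subgroup (PU (Fin n)))
    (habel : ∀ x ∈ F, ∀ y ∈ F, x * y = y * x)
    (hfin : (F : Set (PU (Fin n))).Finite)
    (hcond : ∀ X : Matrix (Fin n) (Fin n) ℂ, Xᴴ = -X → X.trace = 0 →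
      (∀ A : UG (Fin n), (QuotientGroup.mk A : PU (Fin n)) ∈ F →
        (A : Matrix (Fin n) (Fin n) ℂ) * X * (A : Matrix (Fin n) (Fin n) ℂ)⁻¹ = X) →
      X = 0) :
    ∀ x ∈ F,
      (∀ y ∈ F, ∀ A B : UG (Fin n),
        (QuotientGroup.mk A : PU (Fin n)) = x → (QuotientGroup.mk B : PU (Fin n)) = y →
        ((A * B * A⁻¹ * B⁻¹ : UG (Fin n)) : Matrix (Fin n) (Fin n) ℂ) = 1) →
      x = 1 := by
  intro x hx hcomm
  obtain ⟨A, rfl⟩ := QuotientGroup.mk_surjective x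
  -- A commutes (in the group UG) with every representative of every element of F
  have hgrp : ∀ B : UG (Fin n), (QuotientGroup.mk B : PU (Fin n)) ∈ F → A * B = B * A := by
    intro B hB
    have h := hcomm _ hB A B rfl rfl
    have h1 : (A * B * A⁻¹ * B⁻¹ : UG (Fin n)) = 1 := by
      apply Subtype.coe_injective
      simpa using h
    open commutatorElement in
    have : ⁅A, B⁆ = 1 := h1
    open commutatorElement in
    exact (commutatorElement_eq_one_iff_mul_comm).mp this
  -- matrix-level commuting with A and with Aᴴ
  have hmat : ∀ B : UG (Fin n), (QuotientGroup.mk B : PU (Fin n)) ∈ F →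
      (B : Matrix (Fin n) (Fin n) ℂ) * A = (A : Matrix (Fin n) (Fin n) ℂ) * B := by
    intro B hB
    have := congrArg (fun g : UG (Fin n) => (g : Matrix (Fin n) (Fin n) ℂ)) (hgrp B hB)
    simpa using this.symm
  have hmatstar : ∀ B : UG (Fin n), (QuotientGroup.mk B : PU (Fin n)) ∈ F →
      (B : Matrix (Fin n) (Fin n) ℂ) * (A : Matrix (Fin n) (Fin n) ℂ)ᴴ
        = (A : Matrix (Fin n) (Fin n) ℂ)ᴴ * B := by
    intro B hB
    have h1 : A⁻¹ * B = B * A⁻¹ :=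
      (Commute.inv_left (hgrp B hB)).eq
    have h2 := congrArg (fun g : UG (Fin n) => (g : Matrix (Fin n) (Fin n) ℂ)) h1
    simp only [Matrix.UnitaryGroup.mul_val, Matrix.UnitaryGroup.inv_val,
      Matrix.star_eq_conjTranspose] at h2
    exact h2.symm
  -- inverse of a unitary matrix is its conjugate transpose
  have hinv : ∀ B : UG (Fin n),
      (B : Matrix (Fin n) (Fin n) ℂ)⁻¹ = (B : Matrix (Fin n) (Fin n) ℂ)ᴴ := by
    intro B
    apply Matrix.inv_eq_left_inv
    have := B.2.1
    simpa [Matrix.star_eq_conjTranspose] using this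
  have hBBH : ∀ B : UG (Fin n),
      (B : Matrix (Fin n) (Fin n) ℂ) * (B : Matrix (Fin n) (Fin n) ℂ)ᴴ = 1 := by
    intro B
    have := B.2.2
    simpa [Matrix.star_eq_conjTranspose] using this
  set M : Matrix (Fin n) (Fin n) ℂ := (A : Matrix (Fin n) (Fin n) ℂ) with hM
  have hncast : (n : ℂ) ≠ 0 := by
    exact_mod_cast Nat.cast_ne_zero.mpr (by omega)
  -- generic lemma: a matrix commuting with everything, skew-hermitian after trace removal
  have key : ∀ N : Matrix (Fin n) (Fin n) ℂ, Nᴴ = -N →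
      (∀ B : UG (Fin n), (QuotientGroup.mk B : PU (Fin n)) ∈ F →
        (B : Matrix (Fin n) (Fin n) ℂ) * N = N * (B : Matrix (Fin n) (Fin n) ℂ)) →
      N = (N.trace / n) • 1 := by
    intro N hskew hcomm'
    set c : ℂ := N.trace / n with hc
    set X : Matrix (Fin n) (Fin n) ℂ := N - c • 1 with hX
    have htrc : (starRingEnd ℂ) N.trace = -N.trace := by
      have := congrArg Matrix.trace hskew
      simpa [Matrix.trace_conjTranspose, Matrix.trace_neg] using this
    have hXskew : Xᴴ = -X := by
      rw [hX]
      rw [Matrix.conjTranspose_sub, hskew, Matrix.conjTranspose_smul]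
      have hcc : (starRingEnd ℂ) c = -c := by
        rw [hc, map_div₀, htrc]
        simp [neg_div]
      rw [Matrix.conjTranspose_one]
      rw [show star c = (starRingEnd ℂ) c from rfl, hcc]
      module
    have hXtr : X.trace = 0 := by
      rw [hX]
      rw [Matrix.trace_sub, Matrix.trace_smul, Matrix.trace_one]
      simp only [Fintype.card_fin]
      rw [hc]
      rw [smul_eq_mul, div_mul_cancel₀ _ hncast, sub_self]
    have hXinv : ∀ B : UG (Fin n), (QuotientGroup.mk B : PU (Fin n)) ∈ F →
        (B : Matrix (Fin n) (Fin n) ℂ) * X * (B : Matrix (Fin n) (Fin n) ℂ)⁻¹ = X := by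
      intro B hB
      rw [hinv B]
      have hcX : (B : Matrix (Fin n) (Fin n) ℂ) * X = X * B := by
        rw [hX, Matrix.mul_sub, Matrix.sub_mul, hcomm' B hB]
        congr 1
        simp [Matrix.mul_smul, Matrix.smul_mul]
      rw [hcX, Matrix.mul_assoc, hBBH B, Matrix.mul_one]
    have hX0 : X = 0 := hcond X hXskew hXtr hXinv
    have : N - c • 1 = 0 := hX0
    rw [sub_eq_zero] at this
    exact this
  -- apply to the two skew parts of A
  have h1 : (M - Mᴴ) = ((M - Mᴴ).trace / n) • 1 := by
    apply key
    · rw [Matrix.conjTranspose_sub, Matrix.conjTranspose_conjTranspose]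
      abel
    · intro B hB
      rw [Matrix.mul_sub, Matrix.sub_mul, hmat B hB, hmatstar B hB]
  have h2 : (Complex.I • (M + Mᴴ)) = ((Complex.I • (M + Mᴴ)).trace / n) • 1 := by
    apply key
    · rw [Matrix.conjTranspose_smul, Matrix.conjTranspose_add,
        Matrix.conjTranspose_conjTranspose]
      rw [show star Complex.I = -Complex.I by simp]
      module
    · intro B hB
      rw [Matrix.mul_smul, Matrix.smul_mul, Matrix.mul_add, Matrix.add_mul,
        hmat B hB, hmatstar B hB]
  -- deduce A is scalar
  set c₁ : ℂ := (M - Mᴴ).trace / n with hc₁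
  set c₂ : ℂ := (Complex.I • (M + Mᴴ)).trace / n with hc₂
  have hscalar : M = ((c₁ - Complex.I * c₂) / 2) • 1 := by
    have h2' : M + Mᴴ = (-Complex.I * c₂) • 1 := by
      have := congrArg (fun Z => (-Complex.I) • Z) h2
      simp only [smul_smul] at this
      rw [show -Complex.I * Complex.I = 1 by
        simp [Complex.I_mul_I]] at this
      simpa using this
    have hsum : M + M = (c₁ • 1 : Matrix (Fin n) (Fin n) ℂ) + (-Complex.I * c₂) • 1 := by
      calc M + M = (M - Mᴴ) + (M + Mᴴ) := by abel
        _ = c₁ • 1 + (-Complex.I * c₂) • 1 := by rw [← h1, ← h2']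
    have : (2 : ℂ) • M = ((c₁ + -Complex.I * c₂) • 1 : Matrix (Fin n) (Fin n) ℂ) := by
      rw [two_smul, hsum, add_smul]
    have h3 := congrArg (fun Z => ((2 : ℂ)⁻¹) • Z) this
    simp only [smul_smul] at h3
    norm_num at h3
    rw [h3]
    congr 1
    ring
  set c : ℂ := (c₁ - Complex.I * c₂) / 2 with hcdef
  -- |c| = 1
  have hne : Nonempty (Fin n) := ⟨⟨0, by omega⟩⟩
  obtain ⟨i⟩ := hne
  have hu : Mᴴ * M = 1 := by
    have := A.2.1
    simpa [Matrix.star_eq_conjTranspose, hM] using this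
  have hcc : (starRingEnd ℂ) c * c = 1 := by
    rw [hscalar] at hu
    rw [Matrix.conjTranspose_smul, Matrix.conjTranspose_one, Matrix.smul_mul,
      Matrix.mul_smul, smul_smul, Matrix.one_mul] at hu
    have := congrArg (fun Z : Matrix (Fin n) (Fin n) ℂ => Z i i) hu
    simpa [Matrix.one_apply, Matrix.smul_apply] using this
  have hnormc : ‖c‖ = 1 := by
    have h5 : ‖c‖ * ‖c‖ = 1 := by
      have := congrArg norm hcc
      simpa [norm_mul] using this
    nlinarith [norm_nonneg c]
  -- conclude x = 1
  rw [QuotientGroup.eq_one_iff]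
  exact ⟨c, hnormc, hscalar⟩

end
end

section
/- Let F be a nontrivial finite abelian group and m : F × F → U(1) an antisymmetric bimultiplicative function that is nondegenerate. Let n₁ be the maximal order of the roots of unity m(x,y) over all x, y ∈ F. Then: (i) m(x,y)^{n₁} = 1 for all x, y ∈ F; (ii) for any x₁, y₁ ∈ F such that m(x₁,y₁) has order exactly n₁, both x₁ and y₁ have order n₁, the subgroup ⟨x₁,y₁⟩ is isomorphic to ℤ/n₁ℤ × ℤ/n₁ℤ, and F is the internal direct product of ⟨x₁,y₁⟩ and F₁ = {x ∈ F : m(x,x₁) = m(x,y₁) = 1}, i.e. F = ⟨x₁,y₁⟩ × F₁. -/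
/-- Let `F` be a nontrivial finite abelian group and
`m : F × F → U(1)` a nondegenerate antisymmetric bimultiplicative function, and let `n₁` be
the maximal order of the values `m x y` (which are roots of unity). Then `m x y ^ n₁ = 1`
for all `x y`, and for any `x₁ y₁` with `m x₁ y₁` of order exactly `n₁`: `x₁` and `y₁` have
order `n₁`, `⟨x₁, y₁⟩ ≅ ℤ/n₁ℤ × ℤ/n₁ℤ`, and `F` is the internal direct product of
`⟨x₁, y₁⟩` and `F₁ = {x : m x x₁ = m x y₁ = 1}`. -/
theorem symplectic_splitting (F : Type) [CommGroup F] [Fintype F] [Nontrivial F]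
    (m : F → F → ℂ)
    (hnorm : ∀ x y, ‖m x y‖ = 1)
    (hanti : ∀ x, m x x = 1)
    (hskew : ∀ x y, m x y = (m y x)⁻¹)
    (hbimul : ∀ x y z, m (x * y) z = m x z * m y z)
    (hnondeg : ∀ x, (∀ y, m x y = 1) → x = 1)
    (n₁ : ℕ)
    (hmax : ∃ x y, orderOf (m x y) = n₁)
    (hub : ∀ x y, orderOf (m x y) ≤ n₁) :
    (∀ x y, m x y ^ n₁ = 1) ∧
    ∀ x₁ y₁ : F, orderOf (m x₁ y₁) = n₁ →
      orderOf x₁ = n₁ ∧ orderOf y₁ = n₁ ∧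
      Nonempty ((Subgroup.closure ({x₁, y₁} : Set F)) ≃*
        Multiplicative (ZMod n₁) × Multiplicative (ZMod n₁)) ∧
      (∀ z : F, ∃ w ∈ Subgroup.closure ({x₁, y₁} : Set F),
        ∃ t : F, m t x₁ = 1 ∧ m t y₁ = 1 ∧ z = w * t) ∧
      (∀ w ∈ Subgroup.closure ({x₁, y₁} : Set F), m w x₁ = 1 → m w y₁ = 1 → w = 1) := by
  classical
  have hne : ∀ x y, m x y ≠ 0 := by
    intro x y h
    have := hnorm x y
    rw [h] at this; simp at this
  have h1l : ∀ y, m 1 y = 1 := by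
    intro y
    have h := hbimul 1 1 y
    rw [one_mul] at h
    have h2 : m 1 y * 1 = m 1 y * m 1 y := by rw [mul_one]; exact h
    exact (mul_left_cancel₀ (hne 1 y) h2).symm
  have h1r : ∀ x, m x 1 = 1 := by
    intro x; rw [hskew, h1l, inv_one]
  have hmulr : ∀ x y z, m x (y * z) = m x y * m x z := by
    intro x y z
    rw [hskew, hbimul, mul_inv, ← hskew, ← hskew]
  have hpow : ∀ (x y : F) (n : ℕ), m (x ^ n) y = m x y ^ n := by
    intro x y n
    induction n with
    | zero => simp [h1l]
    | succ k ih => rw [pow_succ, pow_succ, hbimul, ih]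
  have hpowr : ∀ (x y : F) (n : ℕ), m x (y ^ n) = m x y ^ n := by
    intro x y n
    rw [hskew, hpow, hskew x y, inv_pow]
  have hinvl : ∀ x y, m x⁻¹ y = (m x y)⁻¹ := by
    intro x y
    have h := hbimul x x⁻¹ y
    rw [mul_inv_cancel, h1l] at h
    exact (inv_eq_of_mul_eq_one_right h.symm).symm
  have hdvd : ∀ x y, orderOf (m x y) ∣ orderOf x := by
    intro x y
    exact orderOf_dvd_of_pow_eq_one (by rw [← hpow, pow_orderOf_eq_one, h1l])
  have hdvdr : ∀ x y, orderOf (m x y) ∣ orderOf y := by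
    intro x y
    exact orderOf_dvd_of_pow_eq_one (by rw [← hpowr, pow_orderOf_eq_one, h1r])
  -- key lemma
  have key : ∀ x : F, ∃ y, orderOf (m x y) = orderOf x := by
    intro x
    let φ : F →* ℂˣ := MonoidHom.mk' (fun y => Units.mk0 (m x y) (hne x y)) (by
      intro a b
      ext
      simp [hmulr])
    haveI : Finite φ.range := Set.Finite.to_subtype (Set.finite_range φ)
    obtain ⟨g, hg⟩ := Monoid.exists_orderOf_eq_exponent (G := φ.range)
      Monoid.ExponentExists.of_finite
    obtain ⟨y, hy⟩ := g.2
    set d := Monoid.exponent φ.range with hd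
    have hxd : x ^ d = 1 := by
      apply hnondeg
      intro z
      have hz : (⟨φ z, ⟨z, rfl⟩⟩ : φ.range) ^ d = 1 := Monoid.pow_exponent_eq_one _
      have hz2 : (φ z) ^ d = 1 := by
        have := congrArg (Subtype.val) hz
        push_cast at this
        simpa using this
      have hz3 : (m x z) ^ d = 1 := by
        have := congrArg (Units.val) hz2
        push_cast at this
        simpa [φ] using this
      rw [hpow]
      exact hz3
    have hordx : orderOf x ∣ d := orderOf_dvd_of_pow_eq_one hxd
    have hgy : orderOf (m x y) = d := by
      have h3 : ((g : ℂˣ) : ℂ) = m x y := by rw [← hy]; rfl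
      calc orderOf (m x y) = orderOf ((g : ℂˣ) : ℂ) := by rw [h3]
        _ = orderOf (g : ℂˣ) := orderOf_units
        _ = orderOf g := Subgroup.orderOf_coe g
        _ = d := hg
    exact ⟨y, Nat.dvd_antisymm (hdvd x y) (by rw [hgy]; exact hordx)⟩
  -- n₁ equals the exponent of F
  have hen : Monoid.exponent F = n₁ := by
    have h1 : n₁ ∣ Monoid.exponent F := by
      obtain ⟨x0, y0, h0⟩ := hmax
      exact h0 ▸ (hdvd x0 y0).trans (Monoid.order_dvd_exponent x0)
    have h2 : Monoid.exponent F ≤ n₁ := by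
      obtain ⟨g, hg⟩ := Monoid.exists_orderOf_eq_exponent (G := F)
        Monoid.ExponentExists.of_finite
      obtain ⟨y, hy⟩ := key g
      calc Monoid.exponent F = orderOf (m g y) := by rw [hy, hg]
        _ ≤ n₁ := hub g y
    have h3 : n₁ ≤ Monoid.exponent F :=
      Nat.le_of_dvd (Nat.pos_of_ne_zero Monoid.exponent_ne_zero_of_finite) h1
    omega
  have hdvdn : ∀ x : F, orderOf x ∣ n₁ := fun x => hen ▸ Monoid.order_dvd_exponent x
  have part1 : ∀ x y, m x y ^ n₁ = 1 := by
    intro x y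
    exact orderOf_dvd_iff_pow_eq_one.mp ((hdvd x y).trans (hdvdn x))
  have h1n : 1 < n₁ := hen ▸ Monoid.one_lt_exponent
  haveI : NeZero n₁ := ⟨by omega⟩
  haveI : Fact (1 < n₁) := ⟨h1n⟩
  refine ⟨part1, ?_⟩
  intro x₁ y₁ hxy
  set ζ := m x₁ y₁ with hζ
  have hx₁ : orderOf x₁ = n₁ := Nat.dvd_antisymm (hdvdn x₁) (hxy ▸ hdvd x₁ y₁)
  have hy₁ : orderOf y₁ = n₁ := Nat.dvd_antisymm (hdvdn y₁) (hxy ▸ hdvdr x₁ y₁)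
  have hζprim : IsPrimitiveRoot ζ n₁ := hxy ▸ IsPrimitiveRoot.orderOf ζ
  have hζ1 : ∀ k : ℕ, ζ ^ k = 1 → n₁ ∣ k := fun k hk => hxy ▸ orderOf_dvd_of_pow_eq_one hk
  -- computations
  have hmy : ∀ i j : ℕ, m (x₁ ^ i * y₁ ^ j) y₁ = ζ ^ i := by
    intro i j
    rw [hbimul, hpow, hpow, hanti, one_pow, mul_one]
  have hmx : ∀ i j : ℕ, m (x₁ ^ i * y₁ ^ j) x₁ = (ζ ^ j)⁻¹ := by
    intro i j
    rw [hbimul, hpow, hpow, hanti, one_pow, one_mul, hskew y₁ x₁, inv_pow]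
  -- the homomorphism
  have hxmod : ∀ k : ℕ, x₁ ^ (k % n₁) = x₁ ^ k := by
    intro k; rw [← hx₁]; exact pow_mod_orderOf x₁ k
  have hymod : ∀ k : ℕ, y₁ ^ (k % n₁) = y₁ ^ k := by
    intro k; rw [← hy₁]; exact pow_mod_orderOf y₁ k
  have hxadd : ∀ a b : ZMod n₁, x₁ ^ (a + b).val = x₁ ^ a.val * x₁ ^ b.val := by
    intro a b
    rw [ZMod.val_add, hxmod, pow_add]
  have hyadd : ∀ a b : ZMod n₁, y₁ ^ (a + b).val = y₁ ^ a.val * y₁ ^ b.val := by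
    intro a b
    rw [ZMod.val_add, hymod, pow_add]
  let φ2 : Multiplicative (ZMod n₁) × Multiplicative (ZMod n₁) →* F :=
    MonoidHom.mk' (fun p => x₁ ^ (p.1.toAdd).val * y₁ ^ (p.2.toAdd).val) (by
      rintro ⟨a, b⟩ ⟨c, d⟩
      show x₁ ^ (a.toAdd + c.toAdd).val * y₁ ^ (b.toAdd + d.toAdd).val = _
      rw [hxadd, hyadd]
      exact mul_mul_mul_comm _ _ _ _)
  have hφ2 : ∀ p, φ2 p = x₁ ^ (p.1.toAdd).val * y₁ ^ (p.2.toAdd).val := fun p => rfl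
  have hinj : Function.Injective φ2 := by
    rw [injective_iff_map_eq_one]
    rintro ⟨a, b⟩ hp
    rw [hφ2] at hp
    have ha : ζ ^ (a.toAdd).val = 1 := by rw [← hmy (a.toAdd).val (b.toAdd).val, hp, h1l]
    have hb : (ζ ^ (b.toAdd).val)⁻¹ = 1 := by rw [← hmx (a.toAdd).val (b.toAdd).val, hp, h1l]
    rw [inv_eq_one] at hb
    have ha2 : (a.toAdd).val = 0 := Nat.eq_zero_of_dvd_of_lt (hζ1 _ ha) (ZMod.val_lt _)
    have hb2 : (b.toAdd).val = 0 := Nat.eq_zero_of_dvd_of_lt (hζ1 _ hb) (ZMod.val_lt _)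
    have ha3 : a.toAdd = 0 := by rwa [← ZMod.val_eq_zero]
    have hb3 : b.toAdd = 0 := by rwa [← ZMod.val_eq_zero]
    refine Prod.ext ?_ ?_ <;> simp only []
    · exact Multiplicative.toAdd.injective (by simpa using ha3)
    · exact Multiplicative.toAdd.injective (by simpa using hb3)
  -- range equals closure
  have hcl : φ2.range = Subgroup.closure ({x₁, y₁} : Set F) := by
    apply le_antisymm
    · rintro w ⟨p, rfl⟩
      rw [hφ2]
      exact mul_mem (pow_mem (Subgroup.subset_closure (by simp)) _)
        (pow_mem (Subgroup.subset_closure (by simp)) _)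
    · rw [Subgroup.closure_le]
      rintro w (rfl | rfl)
      · exact ⟨(Multiplicative.ofAdd 1, 1), by rw [hφ2]; simp [ZMod.val_one]⟩
      · exact ⟨(1, Multiplicative.ofAdd 1), by rw [hφ2]; simp [ZMod.val_one]⟩
  have hiso : Nonempty ((Subgroup.closure ({x₁, y₁} : Set F)) ≃*
      Multiplicative (ZMod n₁) × Multiplicative (ZMod n₁)) := by
    have hinj' : Function.Injective φ2.rangeRestrict := by
      intro p q h
      apply hinj
      exact Subtype.ext_iff.mp h
    have e1 := MulEquiv.ofBijective φ2.rangeRestrict ⟨hinj', φ2.rangeRestrict_surjective⟩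
    exact ⟨(MulEquiv.subgroupCongr hcl.symm).trans e1.symm⟩
  refine ⟨hx₁, hy₁, hiso, ?_, ?_⟩
  · -- splitting
    intro z
    obtain ⟨c, hclt, hc⟩ := hζprim.eq_pow_of_pow_eq_one (part1 z x₁)
    obtain ⟨a, halt, ha⟩ := hζprim.eq_pow_of_pow_eq_one (part1 z y₁)
    refine ⟨x₁ ^ a * y₁ ^ (n₁ - c), mul_mem (pow_mem (Subgroup.subset_closure (by simp)) _)
      (pow_mem (Subgroup.subset_closure (by simp)) _),
      (x₁ ^ a * y₁ ^ (n₁ - c))⁻¹ * z, ?_, ?_, ?_⟩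
    · rw [hbimul, hinvl, hmx, inv_inv, ← hc, ← pow_add,
        Nat.sub_add_cancel (le_of_lt hclt)]
      exact part1 x₁ y₁
    · rw [hbimul, hinvl, hmy, ← ha]
      exact inv_mul_cancel₀ (pow_ne_zero _ (hne x₁ y₁))
    · rw [mul_inv_cancel_left]
  · -- uniqueness
    intro w hw h1 h2
    rw [← hcl] at hw
    obtain ⟨⟨a, b⟩, rfl⟩ := hw
    rw [hφ2] at h1 h2 ⊢
    rw [hmy] at h2
    rw [hmx, inv_eq_one] at h1
    have ha2 : (a.toAdd).val = 0 := Nat.eq_zero_of_dvd_of_lt (hζ1 _ h2) (ZMod.val_lt _)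
    have hb2 : (b.toAdd).val = 0 := Nat.eq_zero_of_dvd_of_lt (hζ1 _ h1) (ZMod.val_lt _)
    rw [ha2, hb2, pow_zero, pow_zero, mul_one]
end

section
/- Let F be a finite abelian group and m : F × F → U(1) an antisymmetric bimultiplicative function that is nondegenerate. Then there exist an integer s ≥ 0 and integers n₁ ≥ n₂ ≥ … ≥ n_s ≥ 2 with n_{i+1} | n_i for 1 ≤ i ≤ s−1, together with a group isomorphism φ : F → ∏_{i=1}^{s} (ℤ/n_iℤ × ℤ/n_iℤ) such that m(x,y) = ∏_{i=1}^{s} e^{2πi(a_i d_i − b_i c_i)/n_i} whenever φ(x) = ((a_i,b_i))_i and φ(y) = ((c_i,d_i))_i. In particular |F| = (n₁n₂⋯n_s)². -/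
open scoped BigOperators

private def consMulEquiv (s : ℕ) (G : Fin (s+1) → Type) [∀ i, CommGroup (G i)] :
    (G 0 × ∀ i : Fin s, G i.succ) ≃* ∀ i, G i :=
  { Fin.consEquiv G with
    map_mul' := by
      intro p q
      funext i
      induction i using Fin.cases <;> simp [Fin.consEquiv] }

private lemma pow_mod_of_pow_eq_one {M : Type*} [Monoid M] {N : ℕ} {x : M} (hx : x ^ N = 1)
    (n : ℕ) : x ^ (n % N) = x ^ n := by
  conv_rhs => rw [← Nat.div_add_mod n N]
  rw [pow_add, pow_mul, hx, one_pow, one_mul]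

private lemma pow_val_natCast {M : Type*} [Monoid M] {N : ℕ} [NeZero N] {x : M} (hx : x ^ N = 1)
    (n : ℕ) : x ^ ((n : ZMod N)).val = x ^ n := by
  rw [ZMod.val_natCast, pow_mod_of_pow_eq_one hx]

private lemma pow_val_add {M : Type*} [Monoid M] {N : ℕ} [NeZero N] {x : M} (hx : x ^ N = 1)
    (k l : ZMod N) : x ^ (k + l).val = x ^ k.val * x ^ l.val := by
  rw [ZMod.val_add, pow_mod_of_pow_eq_one hx, pow_add]

private lemma pow_val_neg {G : Type*} [DivisionMonoid G] {N : ℕ} [NeZero N] {x : G} (hx : x ^ N = 1)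
    (k : ZMod N) : x ^ ((-k)).val = (x ^ k.val)⁻¹ := by
  have h := pow_val_add hx (-k) k
  rw [neg_add_cancel] at h
  have h0 : x ^ (0 : ZMod N).val = 1 := by rw [ZMod.val_zero, pow_zero]
  rw [h0] at h
  exact eq_inv_of_mul_eq_one_left h.symm

set_option maxHeartbeats 1000000 in
private theorem aux : ∀ (c : ℕ) (F : Type) [CommGroup F] [Fintype F] (m : F → F → ℂ),
    Fintype.card F ≤ c →
    (∀ x y, ‖m x y‖ = 1) →
    (∀ x, m x x = 1) →
    (∀ x y, m x y = (m y x)⁻¹) →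
    (∀ x y z, m (x * y) z = m x z * m y z) →
    (∀ x, (∀ y, m x y = 1) → x = 1) →
    ∃ (s : ℕ) (nn : Fin s → ℕ),
      (∀ i, 2 ≤ nn i) ∧
      (∀ i, nn i ∣ Monoid.exponent F) ∧
      (∀ (i : ℕ) (h : i + 1 < s), nn ⟨i + 1, h⟩ ∣ nn ⟨i, Nat.lt_of_succ_lt h⟩) ∧
      ∃ φ : F ≃* ((i : Fin s) → Multiplicative (ZMod (nn i)) × Multiplicative (ZMod (nn i))),
        (∀ x y : F,
          m x y = ∏ i : Fin s,
            Complex.exp (2 * Real.pi * Complex.I *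
              (((Multiplicative.toAdd ((φ x) i).1).val : ℂ) *
                  ((Multiplicative.toAdd ((φ y) i).2).val : ℂ)
                - ((Multiplicative.toAdd ((φ x) i).2).val : ℂ) *
                  ((Multiplicative.toAdd ((φ y) i).1).val : ℂ)) / (nn i : ℂ))) ∧
        Fintype.card F = (∏ i : Fin s, nn i) ^ 2 := by
  intro c
  induction c with
  | zero =>
    intro F _ _ m hc _ _ _ _ _
    exact absurd (Nat.lt_of_lt_of_le Fintype.card_pos hc) (lt_irrefl 0)
  | succ c IH =>
    intro F _ _ m hc hnorm hanti hskew hbimul hnondeg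
    have mne : ∀ x y, m x y ≠ 0 := by
      intro x y h
      have := hnorm x y
      rw [h] at this
      simp at this
    have m1 : ∀ z, m 1 z = 1 := by
      intro z
      have h := hbimul 1 1 z
      rw [one_mul] at h
      have h2 : m 1 z * 1 = m 1 z * m 1 z := by rw [mul_one, ← h]
      exact (mul_left_cancel₀ (mne 1 z) h2).symm
    have mz1 : ∀ z, m z 1 = 1 := by
      intro z; rw [hskew, m1, inv_one]
    have mmulr : ∀ x y z, m x (y * z) = m x y * m x z := by
      intro x y z
      rw [hskew, hbimul, mul_inv, ← hskew, ← hskew]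
    have mpowl : ∀ x y (n : ℕ), m (x ^ n) y = m x y ^ n := by
      intro x y n
      induction n with
      | zero => rw [pow_zero, pow_zero, m1]
      | succ n ih => rw [pow_succ, pow_succ, hbimul, ih]
    have mpowr : ∀ x y (n : ℕ), m x (y ^ n) = m x y ^ n := by
      intro x y n
      rw [hskew, mpowl, ← inv_pow, ← hskew]
    have minvl : ∀ x y, m x⁻¹ y = (m x y)⁻¹ := by
      intro x y
      have h := hbimul x⁻¹ x y
      rw [inv_mul_cancel, m1] at h
      exact eq_inv_of_mul_eq_one_left h.symm
    by_cases htriv : ∀ x : F, x = 1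
    · refine ⟨0, Fin.elim0, fun i => i.elim0, fun i => i.elim0, fun i h => absurd h (by omega),
        ⟨{ toFun := fun _ => fun i => i.elim0
           invFun := fun _ => 1
           left_inv := fun x => (htriv x).symm
           right_inv := fun f => funext fun i => i.elim0
           map_mul' := fun x y => funext fun i => i.elim0 }, ?_, ?_⟩⟩
      · intro x y
        rw [htriv x, m1, Fin.prod_univ_zero]
      · rw [Fin.prod_univ_zero, one_pow]
        exact Fintype.card_eq_one_iff.mpr ⟨1, fun x => htriv x⟩
    · -- main case
      push_neg at htriv
      obtain ⟨x₀, hx₀⟩ := htriv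
      set N := Monoid.exponent F with hNdef
      have hNpos : 0 < N := Monoid.ExponentExists.of_finite.exponent_pos
      have hN2 : 2 ≤ N := by
        have h1 : orderOf x₀ ≠ 1 := fun h => hx₀ (orderOf_eq_one_iff.mp h)
        have h2 : 0 < orderOf x₀ := orderOf_pos x₀
        have h3 : orderOf x₀ ≤ N := Nat.le_of_dvd hNpos (Monoid.order_dvd_exponent x₀)
        omega
      haveI : NeZero N := ⟨by omega⟩
      obtain ⟨a, ha⟩ := Monoid.exists_orderOf_eq_exponent (G := F) Monoid.ExponentExists.of_finite
      have haN : orderOf a = N := by rw [ha, ← hNdef]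
      have hpowN : ∀ x : F, x ^ N = 1 := fun x => Monoid.pow_exponent_eq_one x
      set eC : ℂ := Complex.exp (2 * Real.pi * Complex.I / N) with heCdef
      have hprim : IsPrimitiveRoot eC N := Complex.isPrimitiveRoot_exp N (by omega)
      have heN : eC ^ N = 1 := hprim.pow_eq_one
      have hmN : ∀ x y, m x y ^ N = 1 := by
        intro x y; rw [← mpowl, hpowN, m1]
      have hex : ∀ x y : F, ∃ k : ZMod N, m x y = eC ^ k.val := by
        intro x y
        obtain ⟨i, _, hie⟩ := hprim.eq_pow_of_pow_eq_one (hmN x y)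
        exact ⟨(i : ZMod N), by rw [pow_val_natCast heN, hie]⟩
      choose L hL using hex
      have einj : ∀ k l : ZMod N, eC ^ k.val = eC ^ l.val → k = l := by
        intro k l h
        exact ZMod.val_injective N (hprim.pow_inj (ZMod.val_lt k) (ZMod.val_lt l) h)
      have Ladd : ∀ x y z : F, L (x * y) z = L x z + L y z := by
        intro x y z
        apply einj
        rw [pow_val_add heN, ← hL, ← hL, ← hL, hbimul]
      -- find b with m a b = eC
      let χ : F →* ℂˣ :=
        { toFun := fun y => Units.mk0 (m a y) (mne a y)
          map_one' := Units.ext (by simp [mz1])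
          map_mul' := fun y z => Units.ext (by simp [mmulr]) }
      have hχval : ∀ y, ((χ y : ℂˣ) : ℂ) = m a y := fun y => rfl
      haveI : Finite (↥χ.range) := Set.Finite.to_subtype (Set.finite_range χ)
      haveI : Fintype (↥χ.range) := Fintype.ofFinite _
      obtain ⟨g, hg⟩ := IsCyclic.exists_generator (α := ↥χ.range)
      have hcardg : orderOf g = Fintype.card ↥χ.range := by
        rw [orderOf_eq_card_of_forall_mem_zpowers hg, Nat.card_eq_fintype_card]
      obtain ⟨y₀, hy₀⟩ := g.2
      have hNcard : N ∣ Fintype.card ↥χ.range := by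
        have hall : ∀ y : F, m (a ^ Fintype.card ↥χ.range) y = 1 := by
          intro y
          rw [mpowl]
          have hmem : (⟨χ y, ⟨y, rfl⟩⟩ : ↥χ.range) ^ Fintype.card ↥χ.range = 1 :=
            pow_card_eq_one
          have h1 : (χ y : ℂˣ) ^ Fintype.card ↥χ.range = 1 := by
            have h0 := congrArg (Subtype.val) hmem
            push_cast at h0
            exact h0
          have h2 := congrArg (Units.val) h1
          rw [Units.val_pow_eq_pow_val, hχval] at h2
          exact h2
        have := hnondeg _ hall
        rw [← haN]
        exact orderOf_dvd_of_pow_eq_one this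
      have hgN : (g : ℂˣ) ^ N = 1 := by
        rw [← hy₀]
        apply Units.ext
        rw [Units.val_pow_eq_pow_val, hχval]
        simpa using hmN a y₀
      have hcardN : Fintype.card ↥χ.range = N := by
        have h1 : orderOf g ∣ N := by
          rw [← Subgroup.orderOf_coe g]
          exact orderOf_dvd_of_pow_eq_one hgN
        have h2 : N ∣ orderOf g := by rw [hcardg]; exact hNcard
        rw [← hcardg]
        exact Nat.dvd_antisymm h1 h2
      have hgprim : IsPrimitiveRoot ((g : ℂˣ) : ℂ) N := by
        have horder : orderOf ((g : ℂˣ) : ℂ) = N := by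
          rw [orderOf_units, Subgroup.orderOf_coe, hcardg, hcardN]
        exact horder ▸ IsPrimitiveRoot.orderOf _
      obtain ⟨i₀, _, hi₀⟩ := hgprim.eq_pow_of_pow_eq_one heN
      set b : F := y₀ ^ i₀ with hbdef
      have hmab : m a b = eC := by
        rw [hbdef, mpowr, ← hi₀]
        congr 1
        rw [← hχval y₀, hy₀]
      have hmba : m b a = eC⁻¹ := by rw [hskew, hmab]
      -- coordinates
      set A : F → ZMod N := fun x => L x b with hAdef
      set B : F → ZMod N := fun x => - L x a with hBdef
      have hLxb : ∀ x, m x b = eC ^ (A x).val := fun x => hL x b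
      have hLxa : ∀ x, m x a = (eC ^ (B x).val)⁻¹ := by
        intro x
        rw [hL x a]
        have : L x a = - B x := by rw [hBdef]; simp
        rw [this, pow_val_neg heN]
      -- the subgroup K
      set K : Subgroup F :=
        { carrier := {x | m x a = 1 ∧ m x b = 1}
          one_mem' := ⟨m1 a, m1 b⟩
          mul_mem' := by
            rintro x y ⟨h1, h2⟩ ⟨h3, h4⟩
            exact ⟨by rw [hbimul, h1, h3, one_mul], by rw [hbimul, h2, h4, one_mul]⟩
          inv_mem' := by
            rintro x ⟨h1, h2⟩
            exact ⟨by rw [minvl, h1, inv_one], by rw [minvl, h2, inv_one]⟩ } with hKdef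
      have hmemK : ∀ x : F, x ∈ K ↔ m x a = 1 ∧ m x b = 1 := fun x => Iff.rfl
      -- decomposition
      set gm : F → F := fun x => a ^ (A x).val * b ^ (B x).val with hgmdef
      have hmgm : ∀ x y, m (gm x) y = m a y ^ (A x).val * m b y ^ (B x).val := by
        intro x y
        rw [hgmdef]
        simp only
        rw [hbimul, mpowl, mpowl]
      have eCne : eC ≠ 0 := Complex.exp_ne_zero _
      have hKmem : ∀ x : F, x * (gm x)⁻¹ ∈ K := by
        intro x
        rw [hmemK]
        constructor
        · rw [hbimul, minvl, hmgm, hanti, one_pow, one_mul, hmba, hLxa, inv_pow, inv_inv]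
          exact inv_mul_cancel₀ (pow_ne_zero _ eCne)
        · rw [hbimul, minvl, hmgm, hanti, one_pow, mul_one, hmab, hLxb]
          exact mul_inv_cancel₀ (pow_ne_zero _ eCne)
      -- compute coordinates of a decomposed element
      have hcoordA : ∀ (u v : ZMod N) (k : F), k ∈ K →
          A (a ^ u.val * b ^ v.val * k) = u := by
        intro u v k hk
        have hm : m (a ^ u.val * b ^ v.val * k) b = eC ^ u.val := by
          rw [hbimul, hbimul, mpowl, mpowl, hmab, hanti, one_pow, mul_one,
            ((hmemK k).mp hk).2, mul_one]
        apply einj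
        rw [← hLxb, hm]
      have hcoordB : ∀ (u v : ZMod N) (k : F), k ∈ K →
          B (a ^ u.val * b ^ v.val * k) = v := by
        intro u v k hk
        have hm : m (a ^ u.val * b ^ v.val * k) a = (eC ^ v.val)⁻¹ := by
          rw [hbimul, hbimul, mpowl, mpowl, hmba, hanti, one_pow, one_mul,
            ((hmemK k).mp hk).1, mul_one, inv_pow]
        have h2 := hLxa (a ^ u.val * b ^ v.val * k)
        rw [hm] at h2
        have h3 : eC ^ v.val = eC ^ (B (a ^ u.val * b ^ v.val * k)).val :=
          inv_injective h2
        exact (einj _ _ h3.symm)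
      have hAadd : ∀ x y, A (x * y) = A x + A y := fun x y => Ladd x y b
      have hBadd : ∀ x y, B (x * y) = B x + B y := by
        intro x y
        rw [hBdef]
        simp only
        rw [Ladd, neg_add]
      have hapow : ∀ k l : ZMod N, a ^ (k + l).val = a ^ k.val * a ^ l.val :=
        pow_val_add (hpowN a)
      have hbpow : ∀ k l : ZMod N, b ^ (k + l).val = b ^ k.val * b ^ l.val :=
        pow_val_add (hpowN b)
      -- the splitting isomorphism
      set ψ : F ≃* (Multiplicative (ZMod N) × Multiplicative (ZMod N)) × ↥K :=
        { toFun := fun x => ((Multiplicative.ofAdd (A x), Multiplicative.ofAdd (B x)),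
            ⟨x * (gm x)⁻¹, hKmem x⟩)
          invFun := fun p => a ^ (Multiplicative.toAdd p.1.1).val *
            b ^ (Multiplicative.toAdd p.1.2).val * (p.2 : F)
          left_inv := by
            intro x
            show gm x * (x * (gm x)⁻¹) = x
            rw [mul_comm x, mul_inv_cancel_left]
          right_inv := by
            rintro ⟨⟨u, v⟩, k, hk⟩
            simp only
            have hA' := hcoordA (Multiplicative.toAdd u) (Multiplicative.toAdd v) k hk
            have hB' := hcoordB (Multiplicative.toAdd u) (Multiplicative.toAdd v) k hk
            refine Prod.ext (Prod.ext ?_ ?_) (Subtype.ext ?_)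
            · simp only [hA']; rfl
            · simp only [hB']; rfl
            · show (a ^ _ * b ^ _ * k) * (gm _)⁻¹ = k
              rw [show gm (a ^ (Multiplicative.toAdd u).val * b ^ (Multiplicative.toAdd v).val * k)
                  = a ^ (Multiplicative.toAdd u).val * b ^ (Multiplicative.toAdd v).val from by
                rw [hgmdef]; simp only [hA', hB']]
              rw [mul_comm _ k, mul_inv_cancel_right]
          map_mul' := by
            intro x y
            refine Prod.ext (Prod.ext ?_ ?_) (Subtype.ext ?_)
            · simp only [hAadd]; rfl
            · simp only [hBadd]; rfl
            · show (x * y) * (gm (x * y))⁻¹ = (x * (gm x)⁻¹) * (y * (gm y)⁻¹)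
              rw [hgmdef]
              simp only [hAadd, hBadd, hapow, hbpow]
              simp only [mul_inv]
              simp only [mul_assoc, mul_comm, mul_left_comm]
          } with hψdef
      -- apply induction hypothesis to K
      haveI : Fintype ↥K := Fintype.ofFinite _
      have hcardF : Fintype.card F = N ^ 2 * Fintype.card ↥K := by
        rw [Fintype.card_congr ψ.toEquiv, Fintype.card_prod, Fintype.card_prod]
        have : Fintype.card (Multiplicative (ZMod N)) = N := by
          rw [Fintype.card_multiplicative, ZMod.card]
        rw [this]
        ring
      have hKlt : Fintype.card ↥K ≤ c := by
        have h1 : 0 < Fintype.card ↥K := Fintype.card_pos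
        have hNN : 4 ≤ N ^ 2 := by nlinarith
        have h5 : 4 * Fintype.card ↥K ≤ N ^ 2 * Fintype.card ↥K :=
          Nat.mul_le_mul_right _ hNN
        rw [hcardF] at hc
        omega
      set m' : ↥K → ↥K → ℂ := fun k l => m (k : F) (l : F) with hm'def
      have hdecomp : ∀ y : F, y = gm y * (y * (gm y)⁻¹) := by
        intro y
        rw [mul_comm y, mul_inv_cancel_left]
      obtain ⟨s, nn, hnn2, hnndvd, hnnchain, φ', hform, hcardK⟩ :=
        IH ↥K m' hKlt (fun x y => hnorm _ _) (fun x => hanti _) (fun x y => hskew _ _)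
          (fun x y z => hbimul _ _ _)
          (by
            rintro ⟨k, hk⟩ hkall
            have : k = 1 := by
              apply hnondeg
              intro y
              have hy := hdecomp y
              rw [hy, mmulr]
              rw [hskew k (gm y), hmgm, hskew a k, hskew b k,
                ((hmemK k).mp hk).1, ((hmemK k).mp hk).2]
              simp only [inv_one, one_pow, one_mul, mul_one]
              exact hkall ⟨y * (gm y)⁻¹, hKmem y⟩
            exact Subtype.ext this)
      have hexpK : Monoid.exponent ↥K ∣ N := by
        apply Monoid.exponent_dvd_of_forall_pow_eq_one
        intro k
        apply Subtype.ext
        push_cast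
        exact hpowN (k : F)
      refine ⟨s + 1, Fin.cons N nn, ?_, ?_, ?_, ?_⟩
      · intro i
        induction i using Fin.cases with
        | zero => exact hN2
        | succ i => exact hnn2 i
      · intro i
        induction i using Fin.cases with
        | zero => exact dvd_rfl
        | succ i => exact ((hnndvd i).trans hexpK)
      · intro i h
        match i, h with
        | 0, h =>
          exact show nn ⟨0, by omega⟩ ∣ N from (hnndvd _).trans hexpK
        | (j+1), h =>
          exact show nn ⟨j+1, by omega⟩ ∣ nn ⟨j, by omega⟩ from hnnchain j (by omega)
      · set G : Fin (s+1) → Type := fun i =>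
          Multiplicative (ZMod (Fin.cons (α := fun _ => ℕ) N nn i)) × Multiplicative (ZMod (Fin.cons (α := fun _ => ℕ) N nn i))
          with hGdef
        set φ : F ≃* ∀ i, G i :=
          ψ.trans ((MulEquiv.prodCongr (MulEquiv.refl _) φ').trans
            (consMulEquiv s G)) with hφdef
        have hφ0 : ∀ x, (φ x) 0 =
            (Multiplicative.ofAdd (A x), Multiplicative.ofAdd (B x)) := by
          intro x
          simp only [hφdef, MulEquiv.trans_apply, consMulEquiv, Fin.consEquiv,
            MulEquiv.coe_mk, Equiv.coe_fn_mk, Fin.cons_zero]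
          rfl
        have hφs : ∀ x (i : Fin s), (φ x) i.succ = φ' ⟨x * (gm x)⁻¹, hKmem x⟩ i := by
          intro x i
          simp only [hφdef, MulEquiv.trans_apply, consMulEquiv, Fin.consEquiv,
            MulEquiv.coe_mk, Equiv.coe_fn_mk, Fin.cons_succ]
          rfl
        refine ⟨φ, ?_, ?_⟩
        · intro x y
          rw [Fin.prod_univ_succ]
          have msplit : ∀ x1 x2 y1 y2 : F,
              m (x1 * x2) (y1 * y2) = m x1 y1 * m x1 y2 * m x2 y1 * m x2 y2 := by
            intro x1 x2 y1 y2
            rw [hbimul, mmulr, mmulr]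
            ring
          have hsplit : m x y = m (gm x) (gm y) * m' ⟨x * (gm x)⁻¹, hKmem x⟩
              ⟨y * (gm y)⁻¹, hKmem y⟩ := by
            have h0 : m x y = m (gm x * (x * (gm x)⁻¹)) (gm y * (y * (gm y)⁻¹)) := by
              rw [← hdecomp x, ← hdecomp y]
            have h1 : m (gm x) (y * (gm y)⁻¹) = 1 := by
              rw [hmgm, hskew a _, ((hmemK _).mp (hKmem y)).1,
                hskew b _, ((hmemK _).mp (hKmem y)).2]
              simp
            have h2 : m (x * (gm x)⁻¹) (gm y) = 1 := by
              rw [hskew, hmgm, hskew a _, ((hmemK _).mp (hKmem x)).1,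
                hskew b _, ((hmemK _).mp (hKmem x)).2]
              simp
            rw [h0, msplit, h1, h2, mul_one, mul_one]
          have hma_gm : ∀ z, m a (gm z) = eC ^ (B z).val := by
            intro z
            rw [hskew a (gm z), hmgm, hanti, one_pow, one_mul, hmba, inv_pow, inv_inv]
          have hmb_gm : ∀ z, m b (gm z) = (eC ^ (A z).val)⁻¹ := by
            intro z
            rw [hskew b (gm z), hmgm, hanti, one_pow, mul_one, hmab]
          have hggE : m (gm x) (gm y) =
              Complex.exp (2 * Real.pi * Complex.I *
                (((A x).val : ℂ) * ((B y).val : ℂ) -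
                 ((B x).val : ℂ) * ((A y).val : ℂ)) / (N : ℂ)) := by
            rw [hmgm, hma_gm, hmb_gm, inv_pow, ← pow_mul, ← pow_mul]
            rw [heCdef]
            rw [← Complex.exp_nat_mul, ← Complex.exp_nat_mul, ← Complex.exp_neg,
              ← Complex.exp_add]
            congr 1
            push_cast
            ring
          rw [hsplit, hform, hggE]
          congr 1
        · rw [hcardF, hcardK, Fin.prod_univ_succ, Fin.cons_zero, mul_pow]
          congr 1

private lemma antitone_of_chain {s : ℕ} (nn : Fin s → ℕ) (hpos : ∀ i, 2 ≤ nn i)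
    (hchain : ∀ (i : ℕ) (h : i + 1 < s), nn ⟨i + 1, h⟩ ∣ nn ⟨i, Nat.lt_of_succ_lt h⟩) :
    Antitone nn := by
  have key : ∀ (d : ℕ) (i j : Fin s), (j : ℕ) = (i : ℕ) + d → nn j ∣ nn i := by
    intro d
    induction d with
    | zero =>
      intro i j hij
      have : i = j := Fin.ext (by omega)
      rw [this]
    | succ d ihd =>
      intro i j hij
      have hlt : (i : ℕ) + d + 1 < s := by omega
      have h1 : nn ⟨(i : ℕ) + d + 1, hlt⟩ ∣ nn ⟨(i : ℕ) + d, Nat.lt_of_succ_lt hlt⟩ :=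
        hchain _ hlt
      have h2 : nn ⟨(i : ℕ) + d, Nat.lt_of_succ_lt hlt⟩ ∣ nn i :=
        ihd i ⟨(i : ℕ) + d, Nat.lt_of_succ_lt hlt⟩ rfl
      have hj : j = ⟨(i : ℕ) + d + 1, hlt⟩ := Fin.ext (by show (j : ℕ) = (i : ℕ) + d + 1; omega)
      rw [hj]
      exact h1.trans h2
  intro i j hij
  have hd : (j : ℕ) = (i : ℕ) + ((j : ℕ) - (i : ℕ)) := by omega
  exact Nat.le_of_dvd (by have := hpos i; omega) (key _ i j hd)

/-- A finite abelian group with a nondegenerate antisymmetric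
bimultiplicative `U(1)`-valued function is isomorphic to `∏ᵢ (ℤ/nᵢℤ × ℤ/nᵢℤ)` with
`n₁ ≥ … ≥ n_s ≥ 2`, `n_{i+1} ∣ n_i`, via an isomorphism carrying `m` to the standard
symplectic pairing `m(x,y) = ∏ᵢ e^{2πi(aᵢdᵢ−bᵢcᵢ)/nᵢ}`; in particular `|F| = (n₁⋯n_s)²`. -/
theorem symplectic_structure (F : Type) [CommGroup F] [Fintype F]
    (m : F → F → ℂ)
    (hnorm : ∀ x y, ‖m x y‖ = 1)
    (hanti : ∀ x, m x x = 1)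
    (hskew : ∀ x y, m x y = (m y x)⁻¹)
    (hbimul : ∀ x y z, m (x * y) z = m x z * m y z)
    (hnondeg : ∀ x, (∀ y, m x y = 1) → x = 1) :
    ∃ (s : ℕ) (nn : Fin s → ℕ),
      (∀ i, 2 ≤ nn i) ∧
      Antitone nn ∧
      (∀ (i : ℕ) (h : i + 1 < s), nn ⟨i + 1, h⟩ ∣ nn ⟨i, Nat.lt_of_succ_lt h⟩) ∧
      ∃ φ : F ≃* ((i : Fin s) → Multiplicative (ZMod (nn i)) × Multiplicative (ZMod (nn i))),
        (∀ x y : F,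
          m x y = ∏ i : Fin s,
            Complex.exp (2 * Real.pi * Complex.I *
              (((Multiplicative.toAdd ((φ x) i).1).val : ℂ) *
                  ((Multiplicative.toAdd ((φ y) i).2).val : ℂ)
                - ((Multiplicative.toAdd ((φ x) i).2).val : ℂ) *
                  ((Multiplicative.toAdd ((φ y) i).1).val : ℂ)) / (nn i : ℂ))) ∧
        Fintype.card F = (∏ i : Fin s, nn i) ^ 2 := by
  obtain ⟨s, nn, h2, hdvd, hchain, hφ⟩ :=
    aux (Fintype.card F) F m le_rfl hnorm hanti hskew hbimul hnondeg
  exact ⟨s, nn, h2, antitone_of_chain nn h2 hchain, hchain, hφ⟩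
end

section
/- Let n = n₁n₂⋯n_s·m with n₁ ≥ n₂ ≥ … ≥ n_s ≥ 2, n_{i+1} | n_i for 1 ≤ i ≤ s−1, and m ≥ 1. Identify ℂⁿ with ℂ^{n₁} ⊗ ⋯ ⊗ ℂ^{n_s} ⊗ ℂ^m, and let F be the subgroup of PU(n) generated by H_{n₁} ⊗ ⋯ ⊗ H_{n_s} (acting on the first s tensor factors, identity on ℂ^m) together with the classes of the matrices I ⊗ ⋯ ⊗ I ⊗ D for all diagonal unitary D ∈ U(m). Then F is a maximal abelian subgroup of PU(n): F is abelian, and every element of PU(n) that commutes with all elements of F lies in F. -/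
open Matrix

noncomputable section

variable (ι : Type) [Fintype ι] [DecidableEq ι]

/-- The diagonal matrix `A_k = diag(1, ω_k, …, ω_k^{k-1})`, where `ω_k = e^{2πi/k}`. -/
def Amat (k : ℕ) : Matrix (Fin k) (Fin k) ℂ :=
  Matrix.diagonal fun i => Complex.exp (2 * Real.pi * Complex.I / (k : ℂ)) ^ (i : ℕ)

/-- The cyclic permutation matrix `B_k` sending the `i`-th standard basis vector to the
`(i+1)`-st (indices mod `k`). -/
def Bmat (k : ℕ) : Matrix (Fin k) (Fin k) ℂ :=
  Matrix.of fun i j : Fin k => if (i : ℕ) = ((j : ℕ) + 1) % k then 1 else 0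

/-- The Kronecker factor embedding: the matrix acting as `M` on the `i`-th tensor factor of
`ℂ^{n₁} ⊗ ⋯ ⊗ ℂ^{n_s}` and as the identity on all other factors. -/
def kronFactor {s : ℕ} (nn : Fin s → ℕ) (i : Fin s)
    (M : Matrix (Fin (nn i)) (Fin (nn i)) ℂ) :
    Matrix ((j : Fin s) → Fin (nn j)) ((j : Fin s) → Fin (nn j)) ℂ :=
  Matrix.of fun x y => if ∀ j, j ≠ i → x j = y j then M (x i) (y i) else 0

/-- The subgroup of `PU(n)` generated by `H_{n₁} ⊗ ⋯ ⊗ H_{n_s}` (acting on the first `s`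
tensor factors, identity on `ℂ^m`) together with the classes of `I ⊗ ⋯ ⊗ I ⊗ D` for all
diagonal unitary `D ∈ U(m)`, with respect to an identification `e` of `ℂⁿ` with
`ℂ^{n₁} ⊗ ⋯ ⊗ ℂ^{n_s} ⊗ ℂ^m`. -/
def maxAbelianA (n m : ℕ) {s : ℕ} (nn : Fin s → ℕ)
    (e : (((j : Fin s) → Fin (nn j)) × Fin m) ≃ Fin n) :
    Subgroup (PU (Fin n)) :=
  Subgroup.closure
    ({x | ∃ (i : Fin s) (U : UG (Fin n)), (QuotientGroup.mk U : PU (Fin n)) = x ∧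
      ((∀ a b u v, (U : Matrix (Fin n) (Fin n) ℂ) (e (a, u)) (e (b, v))
          = if u = v then kronFactor nn i (Amat (nn i)) a b else 0) ∨
       (∀ a b u v, (U : Matrix (Fin n) (Fin n) ℂ) (e (a, u)) (e (b, v))
          = if u = v then kronFactor nn i (Bmat (nn i)) a b else 0))} ∪
     {x | ∃ (d : Fin m → ℂ) (U : UG (Fin n)), (∀ u, ‖d u‖ = 1) ∧
      (QuotientGroup.mk U : PU (Fin n)) = x ∧
      (∀ a b u v, (U : Matrix (Fin n) (Fin n) ℂ) (e (a, u)) (e (b, v))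
          = if a = b ∧ u = v then d u else 0)})


namespace MaxAb

lemma unit_star_mul {z : ℂ} (h : ‖z‖ = 1) : star z * z = 1 := by
  have := Complex.mul_conj z
  rw [mul_comm] at this
  rw [Complex.star_def, this, Complex.normSq_eq_norm_sq]
  simp [h]

lemma unit_ne_zero {z : ℂ} (h : ‖z‖ = 1) : z ≠ 0 := by
  intro hz; rw [hz] at h; simp at h

lemma norm_one_of_star_mul {z : ℂ} (h : star z * z = 1) : ‖z‖ = 1 := by
  have h2 : (Complex.normSq z : ℂ) = 1 := by
    rw [← h, Complex.star_def, mul_comm, Complex.mul_conj]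
  have h3 : Complex.normSq z = 1 := by exact_mod_cast h2
  have h4 : ‖z‖ ^ 2 = 1 := by
    rw [← Complex.sq_norm] at h3; exact h3
  have h5 : (‖z‖ - 1) * (‖z‖ + 1) = 0 := by ring_nf; nlinarith
  rcases mul_eq_zero.mp h5 with h | h
  · linarith
  · nlinarith [norm_nonneg z]

lemma rel_symm {ι : Type*} [Fintype ι] [DecidableEq ι] {X Y : Matrix ι ι ℂ} {γ : ℂ}
    (hγ : γ ≠ 0) (h : X * Y = γ • (Y * X)) : Y * X = γ⁻¹ • (X * Y) := by
  rw [h, smul_smul, inv_mul_cancel₀ hγ, one_smul]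

section Perm
variable {ι : Type*} [Fintype ι] [DecidableEq ι]

def permMat (σ : ι → ι) : Matrix ι ι ℂ :=
  Matrix.of fun x y => if x = σ y then 1 else 0

lemma permMat_mul (σ τ : ι → ι) : permMat σ * permMat τ = permMat (σ ∘ τ) := by
  ext x y
  rw [Matrix.mul_apply, Finset.sum_eq_single (τ y)]
  · simp [permMat]
  · intro z _ hz; simp [permMat, hz]
  · simp

lemma permMat_id : permMat (id : ι → ι) = 1 := by
  ext x y; simp [permMat, Matrix.one_apply]

lemma permMat_conjTranspose (σ τ : ι → ι) (h1 : ∀ z, τ (σ z) = z) (h2 : ∀ z, σ (τ z) = z) :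
    (permMat σ)ᴴ = permMat τ := by
  ext x y
  simp only [Matrix.conjTranspose_apply, permMat, Matrix.of_apply]
  by_cases h : y = σ x
  · rw [if_pos h, if_pos (by rw [h, h1])]; simp
  · rw [if_neg h, if_neg (fun hx => h (by rw [hx, h2]))]; simp

lemma permMat_mem_unitary (σ τ : ι → ι) (h1 : ∀ z, τ (σ z) = z) (h2 : ∀ z, σ (τ z) = z) :
    permMat σ ∈ unitary (Matrix ι ι ℂ) := by
  rw [Unitary.mem_iff]
  constructor
  · rw [Matrix.star_eq_conjTranspose, permMat_conjTranspose σ τ h1 h2, permMat_mul]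
    rw [show τ ∘ σ = id from funext h1, permMat_id]
  · rw [Matrix.star_eq_conjTranspose, permMat_conjTranspose σ τ h1 h2, permMat_mul]
    rw [show σ ∘ τ = id from funext h2, permMat_id]

lemma mul_permMat_apply (X : Matrix ι ι ℂ) (σ : ι → ι) (x y : ι) :
    (X * permMat σ) x y = X x (σ y) := by
  rw [Matrix.mul_apply, Finset.sum_eq_single (σ y)]
  · simp [permMat]
  · intro z _ hz; simp [permMat, if_neg hz]
  · simp

lemma permMat_mul_apply (X : Matrix ι ι ℂ) {σ : ι → ι} (hσ : Function.Injective σ)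
    (z : ι) (y : ι) : (permMat σ * X) (σ z) y = X z y := by
  rw [Matrix.mul_apply, Finset.sum_eq_single z]
  · simp [permMat]
  · intro w _ hw
    have : σ z ≠ σ w := fun h => hw (hσ h).symm
    simp [permMat, this]
  · simp

lemma diagonal_mul_eq_smul (f : ι → ℂ) (E : Matrix ι ι ℂ) (c : ℂ)
    (h : ∀ x y, E x y ≠ 0 → f x = c * f y) :
    Matrix.diagonal f * E = c • (E * Matrix.diagonal f) := by
  ext x y
  simp only [Matrix.diagonal_mul, Matrix.mul_diagonal, Matrix.smul_apply, smul_eq_mul]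
  by_cases hE : E x y = 0
  · simp [hE]
  · rw [h x y hE]; ring

lemma diagonal_mem_unitary (f : ι → ℂ) (h : ∀ x, ‖f x‖ = 1) :
    Matrix.diagonal f ∈ unitary (Matrix ι ι ℂ) := by
  rw [Unitary.mem_iff]
  have k1 : (fun i => (star (f i)) * f i) = fun _ => (1:ℂ) := funext fun x => unit_star_mul (h x)
  have k2 : (fun i => f i * (star (f i))) = fun _ => (1:ℂ) := funext fun x => by
    rw [mul_comm]; exact unit_star_mul (h x)
  constructor
  · rw [Matrix.star_eq_conjTranspose, Matrix.diagonal_conjTranspose,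
      Matrix.diagonal_mul_diagonal, ← Matrix.diagonal_one]
    exact congrArg _ k1
  · rw [Matrix.star_eq_conjTranspose, Matrix.diagonal_conjTranspose,
      Matrix.diagonal_mul_diagonal, ← Matrix.diagonal_one]
    exact congrArg _ k2

end Perm

def om (k : ℕ) : ℂ := Complex.exp (2 * Real.pi * Complex.I / k)

lemma om_prim {k : ℕ} (hk : k ≠ 0) : IsPrimitiveRoot (om k) k :=
  Complex.isPrimitiveRoot_exp k hk

lemma om_pow_self {k : ℕ} (hk : k ≠ 0) : om k ^ k = 1 := (om_prim hk).pow_eq_one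

lemma om_norm (k : ℕ) : ‖om k‖ = 1 := by
  have h : (2 * (Real.pi : ℂ) * Complex.I / (k : ℂ)) = ((2 * Real.pi / k : ℝ) : ℂ) * Complex.I := by
    push_cast; ring
  rw [om, h, Complex.norm_exp_ofReal_mul_I]

lemma om_ne_zero (k : ℕ) : om k ≠ 0 := unit_ne_zero (om_norm k)

lemma om_pow_mod {k : ℕ} (hk : k ≠ 0) (a : ℕ) : om k ^ (a % k) = om k ^ a := by
  conv_rhs => rw [← Nat.div_add_mod a k]
  rw [pow_add, pow_mul, om_pow_self hk, one_pow, one_mul]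

end MaxAb


namespace MaxAb

variable {s : ℕ} {nn : Fin s → ℕ}

abbrev Idx (nn : Fin s → ℕ) := (j : Fin s) → Fin (nn j)

def KA (nn : Fin s → ℕ) (i : Fin s) : Matrix (Idx nn) (Idx nn) ℂ :=
  kronFactor nn i (Amat (nn i))

def KB (nn : Fin s → ℕ) (i : Fin s) : Matrix (Idx nn) (Idx nn) ℂ :=
  kronFactor nn i (Bmat (nn i))

def fA (nn : Fin s → ℕ) (i : Fin s) : Idx nn → ℂ := fun x => om (nn i) ^ ((x i : ℕ))

lemma eq_of_agree_ne {i : Fin s} {x y : Idx nn} (h : ∀ j, j ≠ i → x j = y j)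
    (hi : x i = y i) : x = y := by
  funext j
  by_cases hj : j = i
  · subst hj; exact hi
  · exact h j hj

lemma KA_eq (i : Fin s) : KA nn i = Matrix.diagonal (fA nn i) := by
  ext x y
  simp only [KA, kronFactor, Amat, Matrix.of_apply]
  by_cases h : x = y
  · subst h
    rw [if_pos (fun j _ => rfl), Matrix.diagonal_apply_eq, Matrix.diagonal_apply_eq]
    rfl
  · rw [Matrix.diagonal_apply_ne _ h]
    by_cases h' : ∀ j, j ≠ i → x j = y j
    · rw [if_pos h']
      have hxy : x i ≠ y i := fun he => h (eq_of_agree_ne h' he)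
      rw [Matrix.diagonal_apply_ne _ hxy]
    · rw [if_neg h']

def shf (nn : Fin s → ℕ) (i : Fin s) (z : Idx nn) : Idx nn :=
  Function.update z i ⟨((z i : ℕ) + 1) % nn i, Nat.mod_lt _ (z i).pos⟩

lemma shf_apply_self (i : Fin s) (z : Idx nn) :
    ((shf nn i z) i : ℕ) = ((z i : ℕ) + 1) % nn i := by
  rw [shf, Function.update_self]

lemma shf_apply_ne {i j : Fin s} (h : j ≠ i) (z : Idx nn) : shf nn i z j = z j := by
  rw [shf, Function.update_of_ne h]

lemma shf_iterate (i : Fin s) (t : ℕ) (z : Idx nn) :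
    (shf nn i)^[t] z = Function.update z i ⟨((z i : ℕ) + t) % nn i, Nat.mod_lt _ (z i).pos⟩ := by
  induction t with
  | zero =>
    simp only [Function.iterate_zero, id_eq]
    have : (⟨((z i : ℕ) + 0) % nn i, Nat.mod_lt _ (z i).pos⟩ : Fin (nn i)) = z i := by
      apply Fin.ext; simp [Nat.mod_eq_of_lt (z i).isLt]
    rw [this, Function.update_eq_self]
  | succ t ih =>
    rw [Function.iterate_succ_apply', ih, shf, Function.update_idem]
    apply congrArg (Function.update z i)
    apply Fin.ext
    simp only [Function.update_self]
    rw [Nat.mod_add_mod, Nat.add_assoc]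

lemma shf_iterate_order (i : Fin s) (z : Idx nn) : (shf nn i)^[nn i] z = z := by
  rw [shf_iterate]
  have : (⟨((z i : ℕ) + nn i) % nn i, Nat.mod_lt _ (z i).pos⟩ : Fin (nn i)) = z i := by
    apply Fin.ext; simp [Nat.add_mod_right, Nat.mod_eq_of_lt (z i).isLt]
  rw [this, Function.update_eq_self]

lemma shf_left_inv (i : Fin s) (z : Idx nn) : (shf nn i)^[nn i - 1] (shf nn i z) = z := by
  have h1 : (0 : ℕ) < nn i := (z i).pos
  have h : (shf nn i)^[nn i - 1] (shf nn i z) = (shf nn i)^[nn i] z := by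
    rw [← Function.iterate_succ_apply]
    congr 1
    omega
  rw [h, shf_iterate_order]

lemma shf_right_inv (i : Fin s) (z : Idx nn) : shf nn i ((shf nn i)^[nn i - 1] z) = z := by
  have h1 : (0 : ℕ) < nn i := (z i).pos
  have h : shf nn i ((shf nn i)^[nn i - 1] z) = (shf nn i)^[nn i] z := by
    have h2 := Function.iterate_succ_apply' (shf nn i) (nn i - 1) z
    rw [← h2, show (nn i - 1).succ = nn i from by omega]
  rw [h, shf_iterate_order]

lemma shf_injective (i : Fin s) : Function.Injective (shf nn i) := by
  intro x y h
  have h2 := congrArg ((shf nn i)^[nn i - 1]) h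
  rwa [shf_left_inv, shf_left_inv] at h2

lemma KB_eq (i : Fin s) : KB nn i = permMat (shf nn i) := by
  ext x y
  simp only [KB, kronFactor, Bmat, permMat, Matrix.of_apply]
  by_cases h : x = shf nn i y
  · rw [if_pos h]
    have hc : ∀ j, j ≠ i → x j = y j := fun j hj => by rw [h]; exact shf_apply_ne hj y
    have hv : (x i : ℕ) = ((y i : ℕ) + 1) % nn i := by rw [h, shf_apply_self]
    rw [if_pos hc, if_pos hv]
  · rw [if_neg h]
    by_cases hc : ∀ j, j ≠ i → x j = y j
    · rw [if_pos hc]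
      by_cases hv : (x i : ℕ) = ((y i : ℕ) + 1) % nn i
      · exfalso
        apply h
        refine eq_of_agree_ne (fun j hj => by rw [hc j hj]; exact (shf_apply_ne hj y).symm) ?_
        apply Fin.ext
        rw [hv, shf_apply_self]
      · rw [if_neg hv]
    · rw [if_neg hc]

lemma KB_pow (i : Fin s) (t : ℕ) : KB nn i ^ t = permMat ((shf nn i)^[t]) := by
  induction t with
  | zero => rw [pow_zero, Function.iterate_zero, permMat_id]
  | succ t ih => rw [pow_succ, ih, KB_eq, permMat_mul, ← Function.iterate_succ]

lemma KB_pow_order (i : Fin s) : KB nn i ^ (nn i) = 1 := by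
  rw [KB_pow]
  rw [show (shf nn i)^[nn i] = id from funext fun z => shf_iterate_order i z, permMat_id]

lemma KA_pow_order (i : Fin s) : KA nn i ^ (nn i) = 1 := by
  rw [KA_eq, Matrix.diagonal_pow, ← Matrix.diagonal_one]
  refine congrArg _ (funext fun x => ?_)
  have h0 : (0:ℕ) < nn i := (x i).pos
  show fA nn i x ^ nn i = 1
  rw [fA, ← pow_mul, mul_comm ((x i : ℕ)) (nn i), pow_mul, om_pow_self (by omega), one_pow]

lemma KA_mem_unitary (i : Fin s) : KA nn i ∈ unitary (Matrix (Idx nn) (Idx nn) ℂ) := by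
  rw [KA_eq]
  exact diagonal_mem_unitary _ (fun x => by rw [fA, norm_pow, om_norm, one_pow])

lemma KB_mem_unitary (i : Fin s) : KB nn i ∈ unitary (Matrix (Idx nn) (Idx nn) ℂ) := by
  rw [KB_eq]
  exact permMat_mem_unitary _ ((shf nn i)^[nn i - 1]) (shf_left_inv i) (shf_right_inv i)

lemma KA_comm_KA (i j : Fin s) : KA nn i * KA nn j = KA nn j * KA nn i := by
  rw [KA_eq, KA_eq, Matrix.diagonal_mul_diagonal, Matrix.diagonal_mul_diagonal]
  exact congrArg _ (funext fun z => mul_comm _ _)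

lemma KA_mul_KB (i j : Fin s) :
    KA nn i * KB nn j = (if i = j then om (nn i) else 1) • (KB nn j * KA nn i) := by
  rw [KA_eq, KB_eq]
  apply diagonal_mul_eq_smul
  intro x y hxy
  have hx : x = shf nn j y := by
    by_contra hc; exact hxy (by simp [permMat, hc])
  subst hx
  by_cases hij : i = j
  · subst hij
    rw [if_pos rfl]
    have h0 : (0:ℕ) < nn i := (y i).pos
    simp only [fA, shf_apply_self]
    rw [om_pow_mod (by omega), pow_succ, mul_comm]
  · rw [if_neg hij]
    rw [fA, fA, shf_apply_ne hij, one_mul]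

lemma KB_comm_KB (i j : Fin s) : KB nn i * KB nn j = KB nn j * KB nn i := by
  rw [KB_eq, KB_eq, permMat_mul, permMat_mul]
  refine congrArg _ (funext fun z => ?_)
  by_cases hij : i = j
  · subst hij; rfl
  · have hji : j ≠ i := Ne.symm hij
    show shf nn i (shf nn j z) = shf nn j (shf nn i z)
    funext l
    by_cases hl : l = i
    · subst hl
      rw [shf_apply_ne hij (shf nn l z)]
      apply Fin.ext
      rw [shf_apply_self, shf_apply_self, shf_apply_ne hij]
    · rw [shf_apply_ne hl]
      by_cases hl2 : l = j
      · subst hl2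
        apply Fin.ext
        rw [shf_apply_self, shf_apply_self, shf_apply_ne hji]
      · rw [shf_apply_ne hl2, shf_apply_ne hl2, shf_apply_ne hl]

end MaxAb


namespace MaxAb

variable {s : ℕ} {nn : Fin s → ℕ}

def QC (nn : Fin s → ℕ) (M : Matrix (Idx nn) (Idx nn) ℂ) (ga gb : Fin s → ℂ) : Prop :=
  (∀ i, M * KA nn i = ga i • (KA nn i * M)) ∧ (∀ i, M * KB nn i = gb i • (KB nn i * M))

lemma QC_one : QC nn 1 (fun _ => 1) (fun _ => 1) :=
  ⟨fun i => by simp, fun i => by simp⟩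

lemma QC_mul {M N : Matrix (Idx nn) (Idx nn) ℂ} {ga gb ga' gb' : Fin s → ℂ}
    (hM : QC nn M ga gb) (hN : QC nn N ga' gb') :
    QC nn (M * N) (fun i => ga i * ga' i) (fun i => gb i * gb' i) := by
  constructor
  · intro i
    calc M * N * KA nn i = M * (N * KA nn i) := by rw [mul_assoc]
      _ = M * (ga' i • (KA nn i * N)) := by rw [hN.1 i]
      _ = ga' i • (M * KA nn i * N) := by rw [Matrix.mul_smul, mul_assoc]
      _ = ga' i • ((ga i • (KA nn i * M)) * N) := by rw [hM.1 i]
      _ = (ga i * ga' i) • (KA nn i * (M * N)) := by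
          rw [Matrix.smul_mul, smul_smul, mul_assoc, mul_comm (ga' i)]
  · intro i
    calc M * N * KB nn i = M * (N * KB nn i) := by rw [mul_assoc]
      _ = M * (gb' i • (KB nn i * N)) := by rw [hN.2 i]
      _ = gb' i • (M * KB nn i * N) := by rw [Matrix.mul_smul, mul_assoc]
      _ = gb' i • ((gb i • (KB nn i * M)) * N) := by rw [hM.2 i]
      _ = (gb i * gb' i) • (KB nn i * (M * N)) := by
          rw [Matrix.smul_mul, smul_smul, mul_assoc, mul_comm (gb' i)]

lemma QC_pow {M : Matrix (Idx nn) (Idx nn) ℂ} {ga gb : Fin s → ℂ}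
    (h : QC nn M ga gb) (t : ℕ) :
    QC nn (M ^ t) (fun i => ga i ^ t) (fun i => gb i ^ t) := by
  induction t with
  | zero => constructor <;> intro i <;> simp
  | succ t ih =>
    constructor
    · intro i
      simp only [pow_succ]
      exact (QC_mul ih h).1 i
    · intro i
      simp only [pow_succ]
      exact (QC_mul ih h).2 i

lemma QC_list (f : Fin s → Matrix (Idx nn) (Idx nn) ℂ) (ga gb : Fin s → Fin s → ℂ)
    (h : ∀ j, QC nn (f j) (ga j) (gb j)) (l : List (Fin s)) :
    QC nn ((l.map f).prod)
      (fun i => (l.map (fun j => ga j i)).prod) (fun i => (l.map (fun j => gb j i)).prod) := by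
  induction l with
  | nil => constructor <;> intro i <;> simp
  | cons a l ih =>
    constructor
    · intro i
      simp only [List.map_cons, List.prod_cons]
      exact (QC_mul (h a) ih).1 i
    · intro i
      simp only [List.map_cons, List.prod_cons]
      exact (QC_mul (h a) ih).2 i

lemma schur (h2 : ∀ i, 2 ≤ nn i) (X : Matrix (Idx nn) (Idx nn) ℂ)
    (hA : ∀ i, X * KA nn i = KA nn i * X) (hB : ∀ i, X * KB nn i = KB nn i * X) :
    ∃ c : ℂ, X = c • (1 : Matrix (Idx nn) (Idx nn) ℂ) := by
  have hdiag : ∀ x y : Idx nn, x ≠ y → X x y = 0 := by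
    intro x y hxy
    by_contra hX
    apply hxy
    funext i
    have h := hA i
    rw [KA_eq] at h
    have he : (X * Matrix.diagonal (fA nn i)) x y = (Matrix.diagonal (fA nn i) * X) x y := by
      rw [h]
    rw [Matrix.mul_diagonal, Matrix.diagonal_mul] at he
    rw [mul_comm (X x y) (fA nn i y)] at he
    have hff : fA nn i x = fA nn i y := (mul_right_cancel₀ hX he).symm
    have hk : nn i ≠ 0 := by have := h2 i; omega
    exact Fin.ext ((om_prim hk).pow_inj (x i).isLt (y i).isLt hff)
  set g : Idx nn → ℂ := fun x => X x x with hg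
  have hshift : ∀ (i : Fin s) (z : Idx nn), g (shf nn i z) = g z := by
    intro i z
    have h := hB i
    rw [KB_eq] at h
    have he : (X * permMat (shf nn i)) (shf nn i z) z
        = (permMat (shf nn i) * X) (shf nn i z) z := by rw [h]
    rw [mul_permMat_apply, permMat_mul_apply X (shf_injective i)] at he
    exact he
  have hiter : ∀ (t : ℕ) (i : Fin s) (z : Idx nn), g ((shf nn i)^[t] z) = g z := by
    intro t
    induction t with
    | zero => intro i z; rfl
    | succ t ih => intro i z; rw [Function.iterate_succ_apply', hshift, ih]
  have hupd : ∀ (z : Idx nn) (i : Fin s) (w : Fin (nn i)), g (Function.update z i w) = g z := by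
    intro z i w
    have hw : (w : ℕ) < nn i := w.isLt
    have hz : (z i : ℕ) < nn i := (z i).isLt
    have hrep : Function.update z i w = (shf nn i)^[(w : ℕ) + (nn i - (z i : ℕ))] z := by
      rw [shf_iterate]
      refine congrArg _ ?_
      apply Fin.ext
      show (w : ℕ) = ((z i : ℕ) + ((w : ℕ) + (nn i - (z i : ℕ)))) % nn i
      rw [show (z i : ℕ) + ((w:ℕ) + (nn i - (z i : ℕ))) = (w:ℕ) + nn i from by omega,
        Nat.add_mod_right, Nat.mod_eq_of_lt hw]
    rw [hrep, hiter]
  have hconst : ∀ x y : Idx nn, g x = g y := by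
    have key : ∀ (T : Finset (Fin s)) (x y : Idx nn), (∀ j, j ∉ T → x j = y j) → g x = g y := by
      intro T
      induction T using Finset.induction_on with
      | empty =>
        intro x y h
        have hxy : x = y := funext fun j => h j (Finset.notMem_empty j)
        rw [hxy]
      | @insert a T ha ih =>
        intro x y h
        rw [← hupd x a (y a)]
        apply ih
        intro j hj
        by_cases hja : j = a
        · subst hja; rw [Function.update_self]
        · rw [Function.update_of_ne hja]
          exact h j (by simp [hja, hj])
    intro x y
    exact key Finset.univ x y (fun j hj => absurd (Finset.mem_univ j) hj)
  refine ⟨g (fun j => ⟨0, by have := h2 j; omega⟩), ?_⟩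
  ext x y
  by_cases hxy : x = y
  · subst hxy
    rw [Matrix.smul_apply, Matrix.one_apply_eq, smul_eq_mul, mul_one]
    exact hconst x _
  · rw [hdiag x y hxy, Matrix.smul_apply, Matrix.one_apply_ne hxy, smul_eq_mul, mul_zero]

lemma rel_pow {ι : Type*} [Fintype ι] [DecidableEq ι] {X K : Matrix ι ι ℂ} {γ : ℂ}
    (h : X * K = γ • (K * X)) (t : ℕ) : X * K ^ t = γ ^ t • (K ^ t * X) := by
  induction t with
  | zero => simp
  | succ t ih =>
    calc X * K ^ (t + 1) = (X * K ^ t) * K := by rw [pow_succ, mul_assoc]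
      _ = (γ ^ t • (K ^ t * X)) * K := by rw [ih]
      _ = γ ^ t • (K ^ t * (X * K)) := by rw [Matrix.smul_mul, mul_assoc]
      _ = γ ^ t • (K ^ t * (γ • (K * X))) := by rw [h]
      _ = γ ^ (t + 1) • (K ^ (t + 1) * X) := by
          rw [Matrix.mul_smul, smul_smul, pow_succ, pow_succ, mul_assoc]

lemma gamma_pow_one {X K : Matrix (Idx nn) (Idx nn) ℂ} {γ : ℂ} (k : ℕ)
    (hK : K ^ k = 1) (hX : X ≠ 0) (h : X * K = γ • (K * X)) : γ ^ k = 1 := by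
  have hk := rel_pow h k
  rw [hK, mul_one, one_mul] at hk
  by_contra hne
  have h2 : (γ ^ k - 1) • X = 0 := by
    rw [sub_smul, one_smul, ← hk, sub_self]
  rcases smul_eq_zero.mp h2 with h3 | h3
  · exact hne (by rwa [sub_eq_zero] at h3)
  · exact hX h3

lemma star_trick {ι : Type*} [Fintype ι] [DecidableEq ι] {W X K : Matrix ι ι ℂ} {γ : ℂ}
    (hγ : γ ≠ 0) (hWu : W ∈ unitary (Matrix ι ι ℂ))
    (hW : W * K = γ • (K * W)) (hX : X * K = γ • (K * X)) :
    (X * star W) * K = K * (X * star W) := by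
  have h1 : star W * W = 1 := (Unitary.mem_iff.mp hWu).1
  have h2 : W * star W = 1 := (Unitary.mem_iff.mp hWu).2
  have h3 : K * star W = γ • (star W * K) := by
    calc K * star W = (star W * W) * K * star W := by rw [h1, one_mul]
      _ = star W * (W * K) * star W := by rw [mul_assoc (star W) W K]
      _ = star W * (γ • (K * W)) * star W := by rw [hW]
      _ = γ • (star W * K * (W * star W)) := by
          rw [Matrix.mul_smul, Matrix.smul_mul]
          congr 1
          simp only [mul_assoc]
      _ = γ • (star W * K) := by rw [h2, mul_one]
  have h4 : star W * K = γ⁻¹ • (K * star W) := by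
    rw [h3, smul_smul, inv_mul_cancel₀ hγ, one_smul]
  calc (X * star W) * K = X * (star W * K) := by rw [mul_assoc]
    _ = γ⁻¹ • (X * (K * star W)) := by rw [h4, Matrix.mul_smul]
    _ = γ⁻¹ • ((X * K) * star W) := by rw [mul_assoc]
    _ = γ⁻¹ • ((γ • (K * X)) * star W) := by rw [hX]
    _ = (γ⁻¹ * γ) • (K * (X * star W)) := by rw [Matrix.smul_mul, smul_smul, mul_assoc]
    _ = K * (X * star W) := by rw [inv_mul_cancel₀ hγ, one_smul]

def Wl (nn : Fin s → ℕ) (a b : Fin s → ℕ) : Matrix (Idx nn) (Idx nn) ℂ :=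
  ((List.finRange s).map (fun j => KA nn j ^ a j * KB nn j ^ b j)).prod

lemma Wl_mem_unitary (a b : Fin s → ℕ) : Wl nn a b ∈ unitary (Matrix (Idx nn) (Idx nn) ℂ) := by
  apply Submonoid.list_prod_mem
  intro x hx
  simp only [List.mem_map] at hx
  obtain ⟨j, -, rfl⟩ := hx
  exact mul_mem (pow_mem (KA_mem_unitary j) _) (pow_mem (KB_mem_unitary j) _)

lemma QC_KA (j : Fin s) :
    QC nn (KA nn j) (fun _ => 1) (fun i => if j = i then om (nn j) else 1) :=
  ⟨fun i => by rw [KA_comm_KA j i, one_smul], fun i => KA_mul_KB j i⟩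

lemma QC_KB (j : Fin s) :
    QC nn (KB nn j) (fun i => (if i = j then om (nn i) else 1)⁻¹) (fun _ => 1) := by
  constructor
  · intro i
    refine rel_symm ?_ (KA_mul_KB i j)
    by_cases hij : i = j <;> simp [hij, om_ne_zero]
  · intro i
    rw [KB_comm_KB j i, one_smul]

lemma exists_W (h2 : ∀ i, 2 ≤ nn i) (α β : Fin s → ℂ)
    (hα : ∀ i, α i ^ nn i = 1) (hβ : ∀ i, β i ^ nn i = 1) :
    ∃ a b : Fin s → ℕ, ∀ X ∈ unitary (Matrix (Idx nn) (Idx nn) ℂ),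
      (∀ i, X * KA nn i = α i • (KA nn i * X)) →
      (∀ i, X * KB nn i = β i • (KB nn i * X)) →
      ∃ c : ℂ, ‖c‖ = 1 ∧ X = c • Wl nn a b := by
  have hkne : ∀ i : Fin s, nn i ≠ 0 := fun i => by have := h2 i; omega
  have hextα : ∀ i, ∃ t, t < nn i ∧ om (nn i) ^ t = α i := by
    intro i
    haveI : NeZero (nn i) := ⟨hkne i⟩
    obtain ⟨t, ht, he⟩ := (om_prim (hkne i)).eq_pow_of_pow_eq_one (hα i)
    exact ⟨t, ht, he⟩
  have hextβ : ∀ i, ∃ t, t < nn i ∧ om (nn i) ^ t = β i := by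
    intro i
    haveI : NeZero (nn i) := ⟨hkne i⟩
    obtain ⟨t, ht, he⟩ := (om_prim (hkne i)).eq_pow_of_pow_eq_one (hβ i)
    exact ⟨t, ht, he⟩
  choose tα htα1 htα2 using hextα
  choose tβ htβ1 htβ2 using hextβ
  set a : Fin s → ℕ := tβ with ha
  set b : Fin s → ℕ := fun i => nn i - tα i with hb
  refine ⟨a, b, ?_⟩
  intro X hXu hXA hXB
  set W := Wl nn a b with hWdef
  have hWu : W ∈ unitary (Matrix (Idx nn) (Idx nn) ℂ) := Wl_mem_unitary a b
  -- q-commutation of W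
  have base : ∀ j, QC nn (KA nn j ^ a j * KB nn j ^ b j)
      (fun i => (1:ℂ) ^ a j * ((if i = j then om (nn i) else 1)⁻¹) ^ b j)
      (fun i => (if j = i then om (nn j) else 1) ^ a j * (1:ℂ) ^ b j) :=
    fun j => QC_mul (QC_pow (QC_KA j) (a j)) (QC_pow (QC_KB j) (b j))
  have hq : QC nn W
      (fun i => ((List.finRange s).map
        (fun j => (1:ℂ) ^ a j * ((if i = j then om (nn i) else 1)⁻¹) ^ b j)).prod)
      (fun i => ((List.finRange s).map
        (fun j => (if j = i then om (nn j) else 1) ^ a j * (1:ℂ) ^ b j)).prod) :=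
    QC_list _ _ _ base (List.finRange s)
  have hGA : ∀ i, ((List.finRange s).map
      (fun j => (1:ℂ) ^ a j * ((if i = j then om (nn i) else 1)⁻¹) ^ b j)).prod = α i := by
    intro i
    rw [← Fin.prod_univ_def]
    have hterm : ∀ j, (1:ℂ) ^ a j * ((if i = j then om (nn i) else 1)⁻¹) ^ b j
        = if i = j then (om (nn i) ^ b j)⁻¹ else 1 := by
      intro j
      split <;> simp [inv_pow]
    rw [Finset.prod_congr rfl (fun j _ => hterm j), Finset.prod_ite_eq]
    rw [if_pos (Finset.mem_univ i)]
    apply inv_eq_of_mul_eq_one_left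
    rw [← htα2 i, ← pow_add,
      show tα i + b i = nn i from by have := htα1 i; simp only [hb]; omega,
      om_pow_self (hkne i)]
  have hGB : ∀ i, ((List.finRange s).map
      (fun j => (if j = i then om (nn j) else 1) ^ a j * (1:ℂ) ^ b j)).prod = β i := by
    intro i
    rw [← Fin.prod_univ_def]
    have hterm : ∀ j, (if j = i then om (nn j) else 1) ^ a j * (1:ℂ) ^ b j
        = if j = i then om (nn j) ^ a j else 1 := by
      intro j
      split <;> simp
    rw [Finset.prod_congr rfl (fun j _ => hterm j), Finset.prod_ite_eq']
    rw [if_pos (Finset.mem_univ i)]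
    exact htβ2 i
  have hWA : ∀ i, W * KA nn i = α i • (KA nn i * W) := by
    intro i
    rw [hq.1 i]
    congr 1
    exact hGA i
  have hWB : ∀ i, W * KB nn i = β i • (KB nn i * W) := by
    intro i
    rw [hq.2 i]
    congr 1
    exact hGB i
  have hαne : ∀ i, α i ≠ 0 := by
    intro i hz
    have := hα i
    rw [hz, zero_pow (hkne i)] at this
    exact zero_ne_one this
  have hβne : ∀ i, β i ≠ 0 := by
    intro i hz
    have := hβ i
    rw [hz, zero_pow (hkne i)] at this
    exact zero_ne_one this
  have keyA : ∀ i, (X * star W) * KA nn i = KA nn i * (X * star W) :=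
    fun i => star_trick (hαne i) hWu (hWA i) (hXA i)
  have keyB : ∀ i, (X * star W) * KB nn i = KB nn i * (X * star W) :=
    fun i => star_trick (hβne i) hWu (hWB i) (hXB i)
  obtain ⟨c, hc⟩ := schur h2 (X * star W) keyA keyB
  have h1 : star W * W = 1 := (Unitary.mem_iff.mp hWu).1
  have hXW : X = c • W := by
    have : (X * star W) * W = X := by rw [mul_assoc, h1, mul_one]
    rw [← this, hc, Matrix.smul_mul, one_mul]
  refine ⟨c, ?_, hXW⟩
  -- norm of c
  have hXs : star X * X = 1 := (Unitary.mem_iff.mp hXu).1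
  rw [hXW] at hXs
  rw [star_smul, Matrix.smul_mul, Matrix.mul_smul, smul_smul, h1] at hXs
  have hcc : star c * c = 1 := by
    have := congrFun (congrFun hXs (fun j => ⟨0, by have := h2 j; omega⟩))
      (fun j => ⟨0, by have := h2 j; omega⟩)
    simpa using this
  exact norm_one_of_star_mul hcc

end MaxAb


namespace MaxAb

variable {s : ℕ} {nn : Fin s → ℕ}

section ExtM

variable {m : ℕ}

def extM (m : ℕ) (M : Matrix (Idx nn) (Idx nn) ℂ) :
    Matrix (Idx nn × Fin m) (Idx nn × Fin m) ℂ :=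
  Matrix.of fun p q => if p.2 = q.2 then M p.1 q.1 else 0

def dmatM (nn : Fin s → ℕ) (d : Fin m → ℂ) : Matrix (Idx nn × Fin m) (Idx nn × Fin m) ℂ :=
  Matrix.diagonal fun p => d p.2

lemma extM_mul (M N : Matrix (Idx nn) (Idx nn) ℂ) :
    extM m M * extM m N = extM m (M * N) := by
  ext p q
  show (extM m M * extM m N) p q = if p.2 = q.2 then (M * N) p.1 q.1 else 0
  rw [Matrix.mul_apply, Fintype.sum_prod_type]
  simp only [extM, Matrix.of_apply]
  by_cases h : p.2 = q.2
  · rw [if_pos h, Matrix.mul_apply]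
    apply Finset.sum_congr rfl
    intro c _
    rw [Finset.sum_eq_single q.2]
    · rw [if_pos h, if_pos rfl]
    · intro w _ hw
      rw [if_neg hw, mul_zero]
    · intro hq; exact absurd (Finset.mem_univ _) hq
  · rw [if_neg h]
    apply Finset.sum_eq_zero
    intro c _
    apply Finset.sum_eq_zero
    intro w _
    by_cases h1 : p.2 = w
    · have hw : ¬ (w = q.2) := fun hw => h (h1.trans hw)
      rw [if_neg hw, mul_zero]
    · rw [if_neg h1, zero_mul]

lemma extM_one : extM (nn := nn) m 1 = 1 := by
  ext p q
  show (if p.2 = q.2 then (1 : Matrix (Idx nn) (Idx nn) ℂ) p.1 q.1 else 0) = (1 : Matrix _ _ ℂ) p q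
  by_cases h2 : p.2 = q.2
  · by_cases h1 : p.1 = q.1
    · have hpq : p = q := Prod.ext_iff.mpr ⟨h1, h2⟩
      rw [if_pos h2, hpq, Matrix.one_apply_eq, Matrix.one_apply_eq]
    · rw [if_pos h2, Matrix.one_apply_ne h1,
        Matrix.one_apply_ne (fun hpq => h1 (congrArg Prod.fst hpq))]
  · rw [if_neg h2, Matrix.one_apply_ne (fun hpq => h2 (congrArg Prod.snd hpq))]

lemma extM_smul (γ : ℂ) (M : Matrix (Idx nn) (Idx nn) ℂ) :
    extM m (γ • M) = γ • extM m M := by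
  ext p q
  show (if p.2 = q.2 then (γ • M) p.1 q.1 else 0) = γ • (if p.2 = q.2 then M p.1 q.1 else 0)
  by_cases h : p.2 = q.2
  · rw [if_pos h, if_pos h]; rfl
  · rw [if_neg h, if_neg h, smul_zero]

lemma extM_star (M : Matrix (Idx nn) (Idx nn) ℂ) :
    star (extM m M) = extM m (star M) := by
  ext p q
  show (extM m M)ᴴ p q = if p.2 = q.2 then Mᴴ p.1 q.1 else 0
  rw [Matrix.conjTranspose_apply]
  show star (if q.2 = p.2 then M q.1 p.1 else 0) = if p.2 = q.2 then Mᴴ p.1 q.1 else 0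
  by_cases h : p.2 = q.2
  · rw [if_pos h.symm, if_pos h, Matrix.conjTranspose_apply]
  · rw [if_neg (fun hh => h hh.symm), if_neg h, star_zero]

lemma extM_pow (M : Matrix (Idx nn) (Idx nn) ℂ) (k : ℕ) :
    extM m (M ^ k) = extM m M ^ k := by
  induction k with
  | zero => rw [pow_zero, pow_zero, extM_one]
  | succ k ih => rw [pow_succ, pow_succ, ← extM_mul, ih]

lemma extM_mem_unitary {M : Matrix (Idx nn) (Idx nn) ℂ}
    (hM : M ∈ unitary (Matrix (Idx nn) (Idx nn) ℂ)) :
    extM m M ∈ unitary (Matrix (Idx nn × Fin m) (Idx nn × Fin m) ℂ) := by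
  rw [Unitary.mem_iff]
  constructor
  · rw [extM_star, extM_mul, (Unitary.mem_iff.mp hM).1, extM_one]
  · rw [extM_star, extM_mul, (Unitary.mem_iff.mp hM).2, extM_one]

lemma extM_mul_dmatM (M : Matrix (Idx nn) (Idx nn) ℂ) (d : Fin m → ℂ) :
    extM m M * dmatM nn d = dmatM nn d * extM m M := by
  ext p q
  rw [dmatM, Matrix.mul_diagonal, Matrix.diagonal_mul]
  show (if p.2 = q.2 then M p.1 q.1 else 0) * d q.2 = d p.2 * (if p.2 = q.2 then M p.1 q.1 else 0)
  by_cases h : p.2 = q.2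
  · rw [if_pos h, h]; ring
  · rw [if_neg h, zero_mul, mul_zero]

lemma dmatM_comm (d d' : Fin m → ℂ) :
    dmatM (m := m) nn d * dmatM nn d' = dmatM nn d' * dmatM nn d := by
  simp only [dmatM]
  rw [Matrix.diagonal_mul_diagonal, Matrix.diagonal_mul_diagonal]
  exact congrArg _ (funext fun p => mul_comm _ _)

lemma dmatM_apply_pair (d : Fin m → ℂ) (a b : Idx nn) (u v : Fin m) :
    dmatM nn d (a, u) (b, v) = if a = b ∧ u = v then d u else 0 := by
  rw [dmatM, Matrix.diagonal_apply]
  by_cases h : (a, u) = (b, v)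
  · rw [if_pos h, if_pos ⟨congrArg Prod.fst h, congrArg Prod.snd h⟩]
  · rw [if_neg h, if_neg (fun hh => h (Prod.ext_iff.mpr hh))]

def blk (M : Matrix (Idx nn × Fin m) (Idx nn × Fin m) ℂ) (u : Fin m) :
    Matrix (Idx nn) (Idx nn) ℂ :=
  Matrix.of fun a b => M (a, u) (b, u)

lemma mul_extM_blk (M : Matrix (Idx nn × Fin m) (Idx nn × Fin m) ℂ)
    (K : Matrix (Idx nn) (Idx nn) ℂ) (u : Fin m) (a b : Idx nn) :
    (M * extM m K) (a, u) (b, u) = (blk M u * K) a b := by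
  rw [Matrix.mul_apply, Matrix.mul_apply, Fintype.sum_prod_type]
  apply Finset.sum_congr rfl
  intro c _
  rw [Finset.sum_eq_single u]
  · show M (a,u) (c,u) * (if u = u then K c b else 0) = blk M u a c * K c b
    rw [if_pos rfl]; rfl
  · intro w _ hw
    show M (a,u) (c,w) * (if w = u then K c b else 0) = 0
    rw [if_neg hw, mul_zero]
  · intro hq; exact absurd (Finset.mem_univ _) hq

lemma extM_mul_blk (M : Matrix (Idx nn × Fin m) (Idx nn × Fin m) ℂ)
    (K : Matrix (Idx nn) (Idx nn) ℂ) (u : Fin m) (a b : Idx nn) :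
    (extM m K * M) (a, u) (b, u) = (K * blk M u) a b := by
  rw [Matrix.mul_apply, Matrix.mul_apply, Fintype.sum_prod_type]
  apply Finset.sum_congr rfl
  intro c _
  rw [Finset.sum_eq_single u]
  · show (if u = u then K a c else 0) * M (c,u) (b,u) = K a c * blk M u c b
    rw [if_pos rfl]; rfl
  · intro w _ hw
    show (if u = w then K a c else 0) * M (c,w) (b,u) = 0
    rw [if_neg (fun hh => hw hh.symm), zero_mul]
  · intro hq; exact absurd (Finset.mem_univ _) hq

lemma blk_rel {M : Matrix (Idx nn × Fin m) (Idx nn × Fin m) ℂ}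
    {K : Matrix (Idx nn) (Idx nn) ℂ} {γ : ℂ}
    (h : M * extM m K = γ • (extM m K * M)) (u : Fin m) :
    blk M u * K = γ • (K * blk M u) := by
  ext a b
  rw [← mul_extM_blk, h, Matrix.smul_apply, Matrix.smul_apply, extM_mul_blk]

lemma blk_mul {M : Matrix (Idx nn × Fin m) (Idx nn × Fin m) ℂ}
    (hb : ∀ p q, p.2 ≠ q.2 → M p q = 0)
    (N : Matrix (Idx nn × Fin m) (Idx nn × Fin m) ℂ) (u : Fin m) :
    blk (M * N) u = blk M u * blk N u := by
  ext a b
  show (M * N) (a, u) (b, u) = _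
  rw [Matrix.mul_apply, Matrix.mul_apply, Fintype.sum_prod_type]
  apply Finset.sum_congr rfl
  intro c _
  rw [Finset.sum_eq_single u]
  · rfl
  · intro w _ hw
    rw [hb (a,u) (c,w) (fun hh => hw hh.symm), zero_mul]
  · intro hq; exact absurd (Finset.mem_univ _) hq

lemma blk_one (u : Fin m) : blk (1 : Matrix (Idx nn × Fin m) (Idx nn × Fin m) ℂ) u = 1 := by
  ext a b
  show (1 : Matrix (Idx nn × Fin m) (Idx nn × Fin m) ℂ) (a,u) (b,u) = (1 : Matrix _ _ ℂ) a b
  rw [Matrix.one_apply, Matrix.one_apply]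
  by_cases h : a = b
  · rw [if_pos h, if_pos (by rw [h])]
  · rw [if_neg h, if_neg (fun hh => h (congrArg Prod.fst hh))]

lemma blk_star (M : Matrix (Idx nn × Fin m) (Idx nn × Fin m) ℂ) (u : Fin m) :
    blk (star M) u = star (blk M u) := by
  ext a b
  show Mᴴ (a,u) (b,u) = (blk M u)ᴴ a b
  rw [Matrix.conjTranspose_apply, Matrix.conjTranspose_apply]
  rfl

lemma hb_star {M : Matrix (Idx nn × Fin m) (Idx nn × Fin m) ℂ}
    (hb : ∀ p q, p.2 ≠ q.2 → M p q = 0) :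
    ∀ p q : Idx nn × Fin m, p.2 ≠ q.2 → (star M) p q = 0 := by
  intro p q h
  show Mᴴ p q = 0
  rw [Matrix.conjTranspose_apply, hb q p (Ne.symm h), star_zero]

lemma blk_mem_unitary {M : Matrix (Idx nn × Fin m) (Idx nn × Fin m) ℂ}
    (hM : M ∈ unitary (Matrix (Idx nn × Fin m) (Idx nn × Fin m) ℂ))
    (hb : ∀ p q, p.2 ≠ q.2 → M p q = 0) (u : Fin m) :
    blk M u ∈ unitary (Matrix (Idx nn) (Idx nn) ℂ) := by
  rw [Unitary.mem_iff]
  constructor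
  · rw [← blk_star, ← blk_mul (hb_star hb), (Unitary.mem_iff.mp hM).1, blk_one]
  · rw [← blk_star, ← blk_mul hb, (Unitary.mem_iff.mp hM).2, blk_one]

lemma decomp {M : Matrix (Idx nn × Fin m) (Idx nn × Fin m) ℂ}
    (hb : ∀ p q, p.2 ≠ q.2 → M p q = 0) (W : Matrix (Idx nn) (Idx nn) ℂ)
    (c : Fin m → ℂ) (h : ∀ u, blk M u = c u • W) :
    M = extM m W * dmatM nn c := by
  ext p q
  rw [dmatM, Matrix.mul_diagonal]
  show M p q = (if p.2 = q.2 then W p.1 q.1 else 0) * c q.2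
  by_cases h2 : p.2 = q.2
  · rw [if_pos h2]
    have hM : M p q = blk M q.2 p.1 q.1 := by
      show M p q = M (p.1, q.2) (q.1, q.2)
      obtain ⟨p1, p2⟩ := p
      obtain ⟨q1, q2⟩ := q
      cases h2
      rfl
    rw [hM, h q.2]
    show c q.2 * W p.1 q.1 = W p.1 q.1 * c q.2
    ring
  · rw [if_neg h2, zero_mul]
    exact hb p q h2

end ExtM

section Transport

variable {m n : ℕ} (e : (Idx nn × Fin m) ≃ Fin n)

def TT (M : Matrix (Idx nn × Fin m) (Idx nn × Fin m) ℂ) : Matrix (Fin n) (Fin n) ℂ :=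
  M.submatrix e.symm e.symm

lemma TT_apply (M : Matrix (Idx nn × Fin m) (Idx nn × Fin m) ℂ) (p q : Idx nn × Fin m) :
    TT e M (e p) (e q) = M p q := by
  rw [TT, Matrix.submatrix_apply, Equiv.symm_apply_apply, Equiv.symm_apply_apply]

lemma TT_mul (M N : Matrix (Idx nn × Fin m) (Idx nn × Fin m) ℂ) :
    TT e M * TT e N = TT e (M * N) :=
  Matrix.submatrix_mul_equiv M N _ e.symm _

lemma TT_one : TT e (1 : Matrix (Idx nn × Fin m) (Idx nn × Fin m) ℂ) = 1 :=
  Matrix.submatrix_one_equiv e.symm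

lemma TT_smul (γ : ℂ) (M : Matrix (Idx nn × Fin m) (Idx nn × Fin m) ℂ) :
    TT e (γ • M) = γ • TT e M := rfl

lemma TT_star (M : Matrix (Idx nn × Fin m) (Idx nn × Fin m) ℂ) :
    star (TT e M) = TT e (star M) := by
  show (TT e M)ᴴ = TT e Mᴴ
  rw [TT, TT, Matrix.conjTranspose_submatrix]

lemma TT_pow (M : Matrix (Idx nn × Fin m) (Idx nn × Fin m) ℂ) (k : ℕ) :
    TT e (M ^ k) = TT e M ^ k := by
  induction k with
  | zero => rw [pow_zero, pow_zero, TT_one]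
  | succ k ih => rw [pow_succ, pow_succ, ← TT_mul, ih]

lemma TT_inj {M N : Matrix (Idx nn × Fin m) (Idx nn × Fin m) ℂ}
    (h : TT e M = TT e N) : M = N := by
  ext p q
  have h2 : TT e M (e p) (e q) = TT e N (e p) (e q) := by rw [h]
  rwa [TT_apply, TT_apply] at h2

lemma TT_unitary {M : Matrix (Idx nn × Fin m) (Idx nn × Fin m) ℂ}
    (hM : M ∈ unitary (Matrix (Idx nn × Fin m) (Idx nn × Fin m) ℂ)) :
    TT e M ∈ Matrix.unitaryGroup (Fin n) ℂ := by
  rw [Matrix.mem_unitaryGroup_iff']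
  rw [TT_star, TT_mul, (Unitary.mem_iff.mp hM).1, TT_one]

lemma eq_TT {U : Matrix (Fin n) (Fin n) ℂ} {M : Matrix (Idx nn × Fin m) (Idx nn × Fin m) ℂ}
    (h : ∀ p q, U (e p) (e q) = M p q) : U = TT e M := by
  ext x y
  calc U x y = U (e (e.symm x)) (e (e.symm y)) := by
        rw [e.apply_symm_apply, e.apply_symm_apply]
    _ = M (e.symm x) (e.symm y) := h _ _
    _ = TT e M x y := rfl

lemma TT_rel {X Y : Matrix (Idx nn × Fin m) (Idx nn × Fin m) ℂ} {γ : ℂ}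
    (h : X * Y = γ • (Y * X)) : TT e X * TT e Y = γ • (TT e Y * TT e X) := by
  rw [TT_mul, h, TT_smul, TT_mul]

end Transport

section GroupHelpers

variable {ι : Type} [Fintype ι] [DecidableEq ι]

lemma scalar_comm_helper (U V : UG ι) (γ : ℂ) (hγ : ‖γ‖ = 1)
    (h : (U : Matrix ι ι ℂ) * (V : Matrix ι ι ℂ)
      = γ • ((V : Matrix ι ι ℂ) * (U : Matrix ι ι ℂ))) :
    (QuotientGroup.mk U : PU ι) * QuotientGroup.mk V
      = QuotientGroup.mk V * QuotientGroup.mk U := by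
  rw [← QuotientGroup.mk_mul, ← QuotientGroup.mk_mul, QuotientGroup.eq]
  refine ⟨star γ, by simpa using hγ, ?_⟩
  have hstar : star ((V * U : UG ι) : Matrix ι ι ℂ) * ((V * U : UG ι) : Matrix ι ι ℂ) = 1 :=
    (Unitary.mem_iff.mp (V * U).2).1
  calc (((U * V)⁻¹ * (V * U) : UG ι) : Matrix ι ι ℂ)
      = (((U * V)⁻¹ : UG ι) : Matrix ι ι ℂ) * ((V * U : UG ι) : Matrix ι ι ℂ) :=
        Matrix.UnitaryGroup.mul_val _ _
    _ = star ((U * V : UG ι) : Matrix ι ι ℂ) * ((V * U : UG ι) : Matrix ι ι ℂ) := by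
        rw [Matrix.UnitaryGroup.inv_val]
    _ = star (γ • ((V * U : UG ι) : Matrix ι ι ℂ)) * ((V * U : UG ι) : Matrix ι ι ℂ) := by
        rw [Matrix.UnitaryGroup.mul_val U V, Matrix.UnitaryGroup.mul_val V U, h]
    _ = star γ • (star ((V * U : UG ι) : Matrix ι ι ℂ) * ((V * U : UG ι) : Matrix ι ι ℂ)) := by
        rw [star_smul, Matrix.smul_mul]
    _ = star γ • (1 : Matrix ι ι ℂ) := by rw [hstar]

lemma rel_of_mk_comm (C U : UG ι)
    (h : (QuotientGroup.mk C : PU ι) * QuotientGroup.mk U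
      = QuotientGroup.mk U * QuotientGroup.mk C) :
    ∃ γ : ℂ, ‖γ‖ = 1 ∧ (C : Matrix ι ι ℂ) * (U : Matrix ι ι ℂ)
      = γ • ((U : Matrix ι ι ℂ) * (C : Matrix ι ι ℂ)) := by
  rw [← QuotientGroup.mk_mul, ← QuotientGroup.mk_mul, QuotientGroup.eq] at h
  obtain ⟨γ, hγ, hMat⟩ := h
  have hγ0 : γ ≠ 0 := unit_ne_zero hγ
  refine ⟨γ⁻¹, by rw [norm_inv, hγ]; norm_num, ?_⟩
  have hgrp : (C * U) * ((C * U)⁻¹ * (U * C)) = U * C := by group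
  have key : ((U * C : UG ι) : Matrix ι ι ℂ) = γ • ((C * U : UG ι) : Matrix ι ι ℂ) := by
    calc ((U * C : UG ι) : Matrix ι ι ℂ)
        = (((C * U) * ((C * U)⁻¹ * (U * C)) : UG ι) : Matrix ι ι ℂ) := by rw [hgrp]
      _ = ((C * U : UG ι) : Matrix ι ι ℂ) * (((C * U)⁻¹ * (U * C) : UG ι) : Matrix ι ι ℂ) :=
          Matrix.UnitaryGroup.mul_val _ _
      _ = ((C * U : UG ι) : Matrix ι ι ℂ) * (γ • (1 : Matrix ι ι ℂ)) := by rw [hMat]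
      _ = γ • ((C * U : UG ι) : Matrix ι ι ℂ) := by rw [Matrix.mul_smul, mul_one]
  calc (C : Matrix ι ι ℂ) * (U : Matrix ι ι ℂ)
      = ((C * U : UG ι) : Matrix ι ι ℂ) := (Matrix.UnitaryGroup.mul_val _ _).symm
    _ = γ⁻¹ • ((U * C : UG ι) : Matrix ι ι ℂ) := by
        rw [key, smul_smul, inv_mul_cancel₀ hγ0, one_smul]
    _ = γ⁻¹ • ((U : Matrix ι ι ℂ) * (C : Matrix ι ι ℂ)) := by
        rw [Matrix.UnitaryGroup.mul_val]

lemma UG_pow_val (U : UG ι) (k : ℕ) :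
    ((U ^ k : UG ι) : Matrix ι ι ℂ) = (U : Matrix ι ι ℂ) ^ k := by
  induction k with
  | zero => rw [pow_zero, pow_zero]; exact Matrix.UnitaryGroup.one_val
  | succ k ih => rw [pow_succ, pow_succ, Matrix.UnitaryGroup.mul_val, ih]

end GroupHelpers

end MaxAb


namespace MaxAb

variable {s : ℕ} {nn : Fin s → ℕ} {m n : ℕ}

def uKA (e : (Idx nn × Fin m) ≃ Fin n) (i : Fin s) : UG (Fin n) :=
  ⟨TT e (extM m (KA nn i)), TT_unitary e (extM_mem_unitary (KA_mem_unitary i))⟩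

def uKB (e : (Idx nn × Fin m) ≃ Fin n) (i : Fin s) : UG (Fin n) :=
  ⟨TT e (extM m (KB nn i)), TT_unitary e (extM_mem_unitary (KB_mem_unitary i))⟩

def uD (e : (Idx nn × Fin m) ≃ Fin n) (d : Fin m → ℂ) (hd : ∀ u, ‖d u‖ = 1) : UG (Fin n) :=
  ⟨TT e (dmatM nn d), TT_unitary e (diagonal_mem_unitary _ (fun p => hd p.2))⟩

lemma mk_uKA_mem (e : (Idx nn × Fin m) ≃ Fin n) (i : Fin s) :
    (QuotientGroup.mk (uKA e i) : PU (Fin n)) ∈ maxAbelianA n m nn e := by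
  apply Subgroup.subset_closure
  exact Or.inl ⟨i, uKA e i, rfl, Or.inl (fun a b u v => by
    show TT e (extM m (KA nn i)) (e (a, u)) (e (b, v)) = _
    rw [TT_apply]
    rfl)⟩

lemma mk_uKB_mem (e : (Idx nn × Fin m) ≃ Fin n) (i : Fin s) :
    (QuotientGroup.mk (uKB e i) : PU (Fin n)) ∈ maxAbelianA n m nn e := by
  apply Subgroup.subset_closure
  exact Or.inl ⟨i, uKB e i, rfl, Or.inr (fun a b u v => by
    show TT e (extM m (KB nn i)) (e (a, u)) (e (b, v)) = _
    rw [TT_apply]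
    rfl)⟩

lemma mk_uD_mem (e : (Idx nn × Fin m) ≃ Fin n) (d : Fin m → ℂ) (hd : ∀ u, ‖d u‖ = 1) :
    (QuotientGroup.mk (uD e d hd) : PU (Fin n)) ∈ maxAbelianA n m nn e := by
  apply Subgroup.subset_closure
  exact Or.inr ⟨d, uD e d hd, hd, rfl, fun a b u v => by
    show TT e (dmatM nn d) (e (a, u)) (e (b, v)) = _
    rw [TT_apply, dmatM_apply_pair]⟩

end MaxAb


namespace MaxAb

theorem final (n m : ℕ) (hm : 1 ≤ m) {s : ℕ} (nn : Fin s → ℕ)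
    (h2 : ∀ i, 2 ≤ nn i) (hanti : Antitone nn)
    (hdvd : ∀ (i : ℕ) (h : i + 1 < s), nn ⟨i + 1, h⟩ ∣ nn ⟨i, Nat.lt_of_succ_lt h⟩)
    (hn : (∏ i, nn i) * m = n)
    (e : (((j : Fin s) → Fin (nn j)) × Fin m) ≃ Fin n) :
    (∀ x ∈ maxAbelianA n m nn e, ∀ y ∈ maxAbelianA n m nn e, x * y = y * x) ∧
    (∀ z : PU (Fin n), (∀ x ∈ maxAbelianA n m nn e, z * x = x * z) →
      z ∈ maxAbelianA n m nn e) := by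
  classical
  -- the generating set
  set GS : Set (PU (Fin n)) :=
    ({x | ∃ (i : Fin s) (U : UG (Fin n)), (QuotientGroup.mk U : PU (Fin n)) = x ∧
      ((∀ a b u v, (U : Matrix (Fin n) (Fin n) ℂ) (e (a, u)) (e (b, v))
          = if u = v then kronFactor nn i (Amat (nn i)) a b else 0) ∨
       (∀ a b u v, (U : Matrix (Fin n) (Fin n) ℂ) (e (a, u)) (e (b, v))
          = if u = v then kronFactor nn i (Bmat (nn i)) a b else 0))} ∪
     {x | ∃ (d : Fin m → ℂ) (U : UG (Fin n)), (∀ u, ‖d u‖ = 1) ∧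
      (QuotientGroup.mk U : PU (Fin n)) = x ∧
      (∀ a b u v, (U : Matrix (Fin n) (Fin n) ℂ) (e (a, u)) (e (b, v))
          = if a = b ∧ u = v then d u else 0)}) with hGS
  have hMAeq : maxAbelianA n m nn e = Subgroup.closure GS := rfl
  -- classification of generators
  have classify : ∀ x ∈ GS, ∃ (U : UG (Fin n)) (X : Matrix (Idx nn × Fin m) (Idx nn × Fin m) ℂ),
      QuotientGroup.mk U = x ∧ (U : Matrix (Fin n) (Fin n) ℂ) = TT e X ∧
      ((∃ i, X = extM m (KA nn i)) ∨ (∃ i, X = extM m (KB nn i)) ∨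
       (∃ d : Fin m → ℂ, X = dmatM nn d)) := by
    rintro x (⟨i, U, rfl, hU | hU⟩ | ⟨d, U, hd, rfl, hU⟩)
    · exact ⟨U, extM m (KA nn i), rfl,
        eq_TT e (fun p q => by rw [hU p.1 q.1 p.2 q.2]; rfl), Or.inl ⟨i, rfl⟩⟩
    · exact ⟨U, extM m (KB nn i), rfl,
        eq_TT e (fun p q => by rw [hU p.1 q.1 p.2 q.2]; rfl), Or.inr (Or.inl ⟨i, rfl⟩)⟩
    · exact ⟨U, dmatM nn d, rfl,
        eq_TT e (fun p q => by
          rw [hU p.1 q.1 p.2 q.2]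
          exact (dmatM_apply_pair d p.1 q.1 p.2 q.2).symm),
        Or.inr (Or.inr ⟨d, rfl⟩)⟩
  -- pairwise quasi-commutation of the classified matrices
  have relAB : ∀ i i' : Fin s, extM (nn := nn) m (KA nn i) * extM m (KB nn i')
      = (if i = i' then om (nn i) else 1) • (extM m (KB nn i') * extM m (KA nn i)) := by
    intro i i'
    rw [extM_mul, extM_mul, KA_mul_KB, extM_smul]
  have hnite : ∀ i i' : Fin s, ‖(if i = i' then om (nn i) else 1 : ℂ)‖ = 1 := by
    intro i i'
    split
    · exact om_norm _
    · exact norm_one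
  have pairGamma : ∀ X Y : Matrix (Idx nn × Fin m) (Idx nn × Fin m) ℂ,
      ((∃ i, X = extM m (KA nn i)) ∨ (∃ i, X = extM m (KB nn i)) ∨
        (∃ d : Fin m → ℂ, X = dmatM nn d)) →
      ((∃ i, Y = extM m (KA nn i)) ∨ (∃ i, Y = extM m (KB nn i)) ∨
        (∃ d : Fin m → ℂ, Y = dmatM nn d)) →
      ∃ γ : ℂ, ‖γ‖ = 1 ∧ X * Y = γ • (Y * X) := by
    rintro X Y (⟨i, rfl⟩ | ⟨i, rfl⟩ | ⟨d, rfl⟩) (⟨i', rfl⟩ | ⟨i', rfl⟩ | ⟨d', rfl⟩)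
    · exact ⟨1, norm_one, by rw [extM_mul, extM_mul, KA_comm_KA, one_smul]⟩
    · exact ⟨_, hnite i i', relAB i i'⟩
    · exact ⟨1, norm_one, by rw [one_smul]; exact extM_mul_dmatM _ _⟩
    · exact ⟨(if i' = i then om (nn i') else 1)⁻¹,
        by rw [norm_inv, hnite i' i]; norm_num,
        rel_symm (unit_ne_zero (hnite i' i)) (relAB i' i)⟩
    · exact ⟨1, norm_one, by rw [extM_mul, extM_mul, KB_comm_KB, one_smul]⟩
    · exact ⟨1, norm_one, by rw [one_smul]; exact extM_mul_dmatM _ _⟩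
    · exact ⟨1, norm_one, by rw [one_smul]; exact (extM_mul_dmatM _ _).symm⟩
    · exact ⟨1, norm_one, by rw [one_smul]; exact (extM_mul_dmatM _ _).symm⟩
    · exact ⟨1, norm_one, by rw [one_smul]; exact dmatM_comm _ _⟩
  have genComm : ∀ x ∈ GS, ∀ y ∈ GS, x * y = y * x := by
    intro x hx y hy
    obtain ⟨U, X, rfl, hUX, hclX⟩ := classify x hx
    obtain ⟨V, Y, rfl, hVY, hclY⟩ := classify y hy
    obtain ⟨γ, hγ, hrel⟩ := pairGamma X Y hclX hclY
    exact scalar_comm_helper U V γ hγ (by rw [hUX, hVY]; exact TT_rel e hrel)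
  constructor
  · -- abelian
    intro x hx y hy
    rw [hMAeq] at hx hy
    have step1 : ∀ y ∈ Subgroup.closure GS, ∀ g ∈ GS, Commute g y := by
      intro y hy
      induction hy using Subgroup.closure_induction with
      | mem z hz => exact fun g hg => genComm g hg z hz
      | one => exact fun g hg => Commute.one_right g
      | mul a b ha hb iha ihb => exact fun g hg => Commute.mul_right (iha g hg) (ihb g hg)
      | inv a ha iha => exact fun g hg => Commute.inv_right (iha g hg)
    induction hx using Subgroup.closure_induction with
    | mem z hz => exact step1 y hy z hz
    | one => exact Commute.one_left y
    | mul a b ha hb iha ihb => exact Commute.mul_left iha ihb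
    | inv a ha iha => exact Commute.inv_left iha
  · -- maximal
    intro z hz
    obtain ⟨C, rfl⟩ := QuotientGroup.mk_surjective z
    set M : Matrix (Idx nn × Fin m) (Idx nn × Fin m) ℂ
      := ((C : Matrix (Fin n) (Fin n) ℂ)).submatrix e e with hMdef
    have hCM : (C : Matrix (Fin n) (Fin n) ℂ) = TT e M := eq_TT e (fun p q => rfl)
    have hMu : M ∈ unitary (Matrix (Idx nn × Fin m) (Idx nn × Fin m) ℂ) := by
      rw [Unitary.mem_iff]
      have hs : star M = (star (C : Matrix (Fin n) (Fin n) ℂ)).submatrix e e := by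
        rw [hMdef]
        show ((C : Matrix (Fin n) (Fin n) ℂ).submatrix e e)ᴴ = _
        rw [Matrix.conjTranspose_submatrix]
        rfl
      constructor
      · rw [hs, hMdef, Matrix.submatrix_mul_equiv _ _ _ e _,
          (Unitary.mem_iff.mp C.2).1, Matrix.submatrix_one_equiv]
      · rw [hs, hMdef, Matrix.submatrix_mul_equiv _ _ _ e _,
          (Unitary.mem_iff.mp C.2).2, Matrix.submatrix_one_equiv]
    have getRel : ∀ (U : UG (Fin n)) (X : Matrix (Idx nn × Fin m) (Idx nn × Fin m) ℂ),
        (U : Matrix (Fin n) (Fin n) ℂ) = TT e X →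
        (QuotientGroup.mk U : PU (Fin n)) ∈ maxAbelianA n m nn e →
        ∃ γ : ℂ, ‖γ‖ = 1 ∧ M * X = γ • (X * M) := by
      intro U X hUX hmem
      obtain ⟨γ, hγ, hrel⟩ := rel_of_mk_comm C U (hz _ hmem)
      refine ⟨γ, hγ, ?_⟩
      apply TT_inj e
      rw [← TT_mul, ← hCM, ← hUX, TT_smul, ← TT_mul, ← hCM, ← hUX]
      exact hrel
    -- Step A : block diagonality
    have hblock : ∀ p q : Idx nn × Fin m, p.2 ≠ q.2 → M p q = 0 := by
      intro p q hpq
      by_contra hMpq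
      have hrow : ∃ r, M (p.1, q.2) r ≠ 0 := by
        by_contra hzr
        push_neg at hzr
        have h1 : (M * star M) (p.1, q.2) (p.1, q.2) = 1 := by
          rw [(Unitary.mem_iff.mp hMu).2, Matrix.one_apply_eq]
        rw [Matrix.mul_apply] at h1
        rw [Finset.sum_congr rfl (fun r _ => by rw [hzr r, zero_mul]),
          Finset.sum_const_zero] at h1
        exact one_ne_zero h1.symm
      obtain ⟨r, hr⟩ := hrow
      set d : Fin m → ℂ := fun w => if w = q.2 then Complex.I else 1 with hd
      have hdu : ∀ u, ‖d u‖ = 1 := by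
        intro u
        by_cases h : u = q.2 <;> simp [hd, h]
      obtain ⟨γ, hγ, hrel⟩ := getRel (uD e d hdu) (dmatM nn d) rfl (mk_uD_mem e d hdu)
      have hent : ∀ p' q' : Idx nn × Fin m, M p' q' * d q'.2 = γ * (d p'.2 * M p' q') := by
        intro p' q'
        have h0 : (M * dmatM nn d) p' q' = (γ • (dmatM nn d * M)) p' q' := by rw [hrel]
        rw [dmatM, Matrix.mul_diagonal, Matrix.smul_apply, Matrix.diagonal_mul,
          smul_eq_mul] at h0
        exact h0
      have h1 := hent p q
      rw [show d q.2 = Complex.I from by simp [hd]] at h1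
      rw [show d p.2 = 1 from by simp [hd, hpq]] at h1
      have hγI : γ = Complex.I := by
        have h1' : M p q * Complex.I = M p q * γ := by rw [h1]; ring
        exact (mul_left_cancel₀ hMpq h1').symm
      have h2' := hent (p.1, q.2) r
      rw [show d (p.1, q.2).2 = Complex.I from by simp [hd], hγI] at h2'
      have h3 : d r.2 = Complex.I * Complex.I := by
        have h2'' : M (p.1, q.2) r * d r.2 = M (p.1, q.2) r * (Complex.I * Complex.I) := by
          rw [h2']; ring
        exact mul_left_cancel₀ hr h2''
      rw [Complex.I_mul_I] at h3
      by_cases hrq : r.2 = q.2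
      · rw [show d r.2 = Complex.I from by simp [hd, hrq]] at h3
        have : Complex.I ≠ -1 := by simp [Complex.ext_iff]
        exact this h3
      · rw [show d r.2 = 1 from by simp [hd, hrq]] at h3
        norm_num at h3
    -- Step B : block relations
    have hAi : ∀ i, ∃ γ : ℂ, ‖γ‖ = 1 ∧
        M * extM m (KA nn i) = γ • (extM m (KA nn i) * M) :=
      fun i => getRel (uKA e i) (extM m (KA nn i)) rfl (mk_uKA_mem e i)
    have hBi : ∀ i, ∃ γ : ℂ, ‖γ‖ = 1 ∧
        M * extM m (KB nn i) = γ • (extM m (KB nn i) * M) :=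
      fun i => getRel (uKB e i) (extM m (KB nn i)) rfl (mk_uKB_mem e i)
    choose α hα1 hα2 using hAi
    choose β hβ1 hβ2 using hBi
    have hNu : ∀ u, blk M u ∈ unitary (Matrix (Idx nn) (Idx nn) ℂ) :=
      fun u => blk_mem_unitary hMu hblock u
    have hNA : ∀ u i, blk M u * KA nn i = α i • (KA nn i * blk M u) :=
      fun u i => blk_rel (hα2 i) u
    have hNB : ∀ u i, blk M u * KB nn i = β i • (KB nn i * blk M u) :=
      fun u i => blk_rel (hβ2 i) u
    set u0 : Fin m := ⟨0, hm⟩ with hu0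
    set x0 : Idx nn := fun j => ⟨0, by have := h2 j; omega⟩ with hx0
    have hN0 : blk M u0 ≠ 0 := by
      intro h0
      have hbu := (Unitary.mem_iff.mp (hNu u0)).1
      rw [h0, star_zero, mul_zero] at hbu
      have h3 := congrFun (congrFun hbu x0) x0
      rw [Matrix.zero_apply, Matrix.one_apply_eq] at h3
      exact zero_ne_one h3
    have hαpow : ∀ i, α i ^ nn i = 1 :=
      fun i => gamma_pow_one (nn i) (KA_pow_order i) hN0 (hNA u0 i)
    have hβpow : ∀ i, β i ^ nn i = 1 :=
      fun i => gamma_pow_one (nn i) (KB_pow_order i) hN0 (hNB u0 i)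
    obtain ⟨a, b, hW⟩ := exists_W h2 α β hαpow hβpow
    have hu : ∀ u, ∃ c : ℂ, ‖c‖ = 1 ∧ blk M u = c • Wl nn a b :=
      fun u => hW (blk M u) (hNu u) (fun i => hNA u i) (fun i => hNB u i)
    choose cs hcs1 hcs2 using hu
    have hMdec : M = extM m (Wl nn a b) * dmatM nn cs := decomp hblock _ _ hcs2
    -- assemble the group element
    set uW : UG (Fin n) := ((List.finRange s).map (fun j => uKA e j ^ a j * uKB e j ^ b j)).prod
      with huW
    set uDc : UG (Fin n) := uD e cs hcs1 with huDc
    have hcoe : ∀ l : List (Fin s),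
        (((l.map (fun j => uKA e j ^ a j * uKB e j ^ b j)).prod : UG (Fin n))
          : Matrix (Fin n) (Fin n) ℂ)
        = TT e (extM m ((l.map (fun j => KA nn j ^ a j * KB nn j ^ b j)).prod)) := by
      intro l
      induction l with
      | nil =>
        simp only [List.map_nil, List.prod_nil]
        rw [extM_one, TT_one]
        exact Matrix.UnitaryGroup.one_val
      | cons j l ih =>
        simp only [List.map_cons, List.prod_cons]
        rw [Matrix.UnitaryGroup.mul_val, ih, Matrix.UnitaryGroup.mul_val,
          UG_pow_val, UG_pow_val]
        show (TT e (extM m (KA nn j))) ^ (a j) * (TT e (extM m (KB nn j))) ^ (b j) * _ = _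
        rw [← TT_pow, ← TT_pow, ← extM_pow, ← extM_pow, TT_mul, TT_mul, extM_mul, extM_mul]
    have hCfinal : C = uW * uDc := by
      apply Subtype.ext
      show (C : Matrix (Fin n) (Fin n) ℂ) = ((uW * uDc : UG (Fin n)) : Matrix (Fin n) (Fin n) ℂ)
      rw [Matrix.UnitaryGroup.mul_val, hCM, hMdec, hcoe (List.finRange s)]
      show TT e (extM m (Wl nn a b) * dmatM nn cs)
        = TT e (extM m (Wl nn a b)) * TT e (dmatM nn cs)
      rw [TT_mul]
    have mk_pow : ∀ (U : UG (Fin n)) (k : ℕ),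
        (QuotientGroup.mk (U ^ k) : PU (Fin n)) = (QuotientGroup.mk U) ^ k :=
      fun U k => map_pow (QuotientGroup.mk' (scalarSG (Fin n))) U k
    have memW : ∀ l : List (Fin s),
        (QuotientGroup.mk ((l.map (fun j => uKA e j ^ a j * uKB e j ^ b j)).prod) : PU (Fin n))
          ∈ maxAbelianA n m nn e := by
      intro l
      induction l with
      | nil =>
        simp only [List.map_nil, List.prod_nil]
        rw [show (QuotientGroup.mk (1 : UG (Fin n)) : PU (Fin n)) = 1 from rfl]
        exact (maxAbelianA n m nn e).one_mem
      | cons j l ih =>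
        simp only [List.map_cons, List.prod_cons]
        rw [QuotientGroup.mk_mul, QuotientGroup.mk_mul, mk_pow, mk_pow]
        exact mul_mem (mul_mem (pow_mem (mk_uKA_mem e j) _) (pow_mem (mk_uKB_mem e j) _)) ih
    rw [hCfinal, QuotientGroup.mk_mul]
    exact mul_mem (memW (List.finRange s)) (mk_uD_mem e cs hcs1)

end MaxAb

/-- With `n = n₁⋯n_s·m`, the subgroup of `PU(n)` generated by
`H_{n₁} ⊗ ⋯ ⊗ H_{n_s}` together with `I ⊗ ⋯ ⊗ I ⊗ D` for diagonal unitary `D ∈ U(m)` is a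
maximal abelian subgroup of `PU(n)`. -/
theorem maxAbelianA_is_maximal_abelian (n m : ℕ) (hm : 1 ≤ m) {s : ℕ} (nn : Fin s → ℕ)
    (h2 : ∀ i, 2 ≤ nn i) (hanti : Antitone nn)
    (hdvd : ∀ (i : ℕ) (h : i + 1 < s), nn ⟨i + 1, h⟩ ∣ nn ⟨i, Nat.lt_of_succ_lt h⟩)
    (hn : (∏ i, nn i) * m = n)
    (e : (((j : Fin s) → Fin (nn j)) × Fin m) ≃ Fin n) :
    (∀ x ∈ maxAbelianA n m nn e, ∀ y ∈ maxAbelianA n m nn e, x * y = y * x) ∧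
    (∀ z : PU (Fin n), (∀ x ∈ maxAbelianA n m nn e, z * x = x * z) →
      z ∈ maxAbelianA n m nn e) := by
  exact MaxAb.final n m hm nn h2 hanti hdvd hn e

end
end

section
/- Let m ≥ 1 and let H₂ = ⟨[I_{m,m}], [J'_m]⟩ be the subgroup of O(2m)/⟨−I⟩ generated by the classes of I_{m,m} and J'_m. Then the centralizer of H₂ in O(2m)/⟨−I⟩ equals {[diag(Y,Y)·Z] : Y ∈ O(m), Z ∈ {I_{2m}, I_{m,m}, J'_m, I_{m,m}J'_m}}; that is, it is the internal product Δ(O(m)/⟨−I⟩) × H₂, where Δ(Y) = diag(Y,Y). -/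
open Matrix

noncomputable section

/-- The orthogonal group `O(ι)` of real orthogonal matrices indexed by `ι`. -/
abbrev OG (ι : Type) [Fintype ι] [DecidableEq ι] := Matrix.orthogonalGroup ι ℝ

variable (ι : Type) [Fintype ι] [DecidableEq ι]

/-- `-I` as an element of the orthogonal group. -/
def negOne : OG ι := ⟨(-1 : Matrix ι ι ℝ), by
  rw [Matrix.mem_unitaryGroup_iff]; simp⟩

/-- The central subgroup `⟨-I⟩` of the orthogonal group. -/
def negSG : Subgroup (OG ι) := Subgroup.zpowers (negOne ι)

instance negSG_normal : (negSG ι).Normal := by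
  constructor
  intro x hx g
  obtain ⟨k, rfl⟩ := Subgroup.mem_zpowers_iff.mp hx
  have h2 : (g : Matrix ι ι ℝ) * ((g⁻¹ : OG ι) : Matrix ι ι ℝ) = 1 := by
    have := Matrix.UnitaryGroup.mul_val g g⁻¹
    rw [mul_inv_cancel] at this
    simpa using this.symm
  have hg : g * negOne ι * g⁻¹ = negOne ι := by
    apply Subtype.ext
    show (g : Matrix ι ι ℝ) * ((negOne ι : OG ι) : Matrix ι ι ℝ)
        * ((g⁻¹ : OG ι) : Matrix ι ι ℝ) = ((negOne ι : OG ι) : Matrix ι ι ℝ)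
    have hneg : ((negOne ι : OG ι) : Matrix ι ι ℝ) = -1 := rfl
    rw [hneg]
    calc (g : Matrix ι ι ℝ) * (-1 : Matrix ι ι ℝ) * ((g⁻¹ : OG ι) : Matrix ι ι ℝ)
        = -((g : Matrix ι ι ℝ) * ((g⁻¹ : OG ι) : Matrix ι ι ℝ)) := by first | (rw [mul_neg_one, neg_mul]) | simp [mul_assoc] | noncomm_ring
      _ = -1 := by rw [h2]
  have hmap : g * (negOne ι) ^ k * g⁻¹ = (g * negOne ι * g⁻¹) ^ k := by
    have := map_zpow (MulAut.conj g) (negOne ι) k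
    simpa [MulAut.conj_apply] using this
  rw [hmap, hg]
  exact Subgroup.zpow_mem _ (Subgroup.mem_zpowers _) k

/-- The projective orthogonal group `O(ι)/⟨-I⟩`. -/
abbrev PO := OG ι ⧸ negSG ι

/-- `I_{m,m} = diag(-I_m, I_m)`, on `ℝ^{2m} = ℝ^m ⊕ ℝ^m`. -/
def Imm (m : ℕ) : Matrix (Fin m ⊕ Fin m) (Fin m ⊕ Fin m) ℝ :=
  Matrix.fromBlocks (-1) 0 0 1

/-- `J'_m = [[0, I_m], [I_m, 0]]`, on `ℝ^{2m} = ℝ^m ⊕ ℝ^m`. -/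
def Jpm (m : ℕ) : Matrix (Fin m ⊕ Fin m) (Fin m ⊕ Fin m) ℝ :=
  Matrix.fromBlocks 0 1 1 0

/-- The subgroup `H₂ = ⟨[I_{m,m}], [J'_m]⟩` of `O(2m)/⟨-I⟩`. -/
def H2 (m : ℕ) : Subgroup (PO (Fin m ⊕ Fin m)) :=
  Subgroup.closure {x | ∃ U : OG (Fin m ⊕ Fin m),
    (QuotientGroup.mk U : PO (Fin m ⊕ Fin m)) = x ∧
    ((U : Matrix (Fin m ⊕ Fin m) (Fin m ⊕ Fin m) ℝ) = Imm m ∨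
     (U : Matrix (Fin m ⊕ Fin m) (Fin m ⊕ Fin m) ℝ) = Jpm m)}

variable {ι}

lemma negOne_sq : negOne ι * negOne ι = 1 := by
  apply Subtype.ext
  show ((-1 : Matrix ι ι ℝ)) * (-1) = 1
  simp

lemma mem_negSG_iff {x : OG ι} : x ∈ negSG ι ↔ x = 1 ∨ x = negOne ι := by
  constructor
  · rintro ⟨k, rfl⟩
    have h2 : (negOne ι) ^ (2:ℤ) = 1 := by rw [zpow_two]; exact negOne_sq
    rcases Int.even_or_odd k with ⟨c, hc⟩ | ⟨c, hc⟩
    · left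
      subst hc
      show negOne ι ^ (c + c) = 1
      rw [← two_mul, _root_.zpow_mul, h2, _root_.one_zpow]
    · right
      subst hc
      show negOne ι ^ (2 * c + 1) = negOne ι
      rw [_root_.zpow_add, _root_.zpow_mul, h2, _root_.one_zpow, one_mul, zpow_one]
  · rintro (rfl | rfl)
    · exact one_mem _
    · exact Subgroup.mem_zpowers _

lemma mk_eq_mk_iff {a b : OG ι} :
    (QuotientGroup.mk a : PO ι) = QuotientGroup.mk b ↔ b = a ∨ b = a * negOne ι := by
  rw [QuotientGroup.eq, mem_negSG_iff]
  constructor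
  · rintro (h | h)
    · left; rw [inv_mul_eq_one] at h; exact h.symm
    · right; rw [inv_mul_eq_iff_eq_mul] at h; exact h
  · rintro (rfl | rfl)
    · left; simp
    · right; simp

lemma mk_commute_iff {a b : OG ι} :
    (QuotientGroup.mk a : PO ι) * QuotientGroup.mk b = QuotientGroup.mk b * QuotientGroup.mk a ↔
      (a : Matrix ι ι ℝ) * b = (b : Matrix ι ι ℝ) * a ∨
      (a : Matrix ι ι ℝ) * b = -((b : Matrix ι ι ℝ) * a) := by
  have : ((QuotientGroup.mk (a * b) : PO ι) = QuotientGroup.mk (b * a)) ↔ _ := mk_eq_mk_iff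
  rw [QuotientGroup.mk_mul, QuotientGroup.mk_mul] at this
  rw [this]
  constructor
  · rintro (h | h)
    · left; exact (congrArg Subtype.val h).symm
    · right
      have h2 := congrArg Subtype.val h
      have h3 : (b : Matrix ι ι ℝ) * a = ((a : Matrix ι ι ℝ) * b) * (-1) := h2
      rw [h3]; simp
  · rintro h
    rcases h with h | h
    · left; exact Subtype.ext h.symm
    · right
      apply Subtype.ext
      show (b : Matrix ι ι ℝ) * a = ((a:Matrix ι ι ℝ) * b) * (-1)
      rw [h]; simp




variable {m : ℕ}

lemma eq_zero_of_neg_eq_self {n p : Type} {B : Matrix n p ℝ} (h : -B = B) : B = 0 := by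
  ext i j
  have h' := congrFun (congrFun h i) j
  simp only [Matrix.neg_apply] at h'
  show B i j = 0
  linarith

lemma Imm_mul_blocks (A B C D : Matrix (Fin m) (Fin m) ℝ) :
    Imm m * Matrix.fromBlocks A B C D = Matrix.fromBlocks (-A) (-B) C D := by
  simp [Imm, Matrix.fromBlocks_multiply]

lemma blocks_mul_Imm (A B C D : Matrix (Fin m) (Fin m) ℝ) :
    Matrix.fromBlocks A B C D * Imm m = Matrix.fromBlocks (-A) B (-C) D := by
  simp [Imm, Matrix.fromBlocks_multiply]

lemma Jpm_mul_blocks (A B C D : Matrix (Fin m) (Fin m) ℝ) :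
    Jpm m * Matrix.fromBlocks A B C D = Matrix.fromBlocks C D A B := by
  simp [Jpm, Matrix.fromBlocks_multiply]

lemma blocks_mul_Jpm (A B C D : Matrix (Fin m) (Fin m) ℝ) :
    Matrix.fromBlocks A B C D * Jpm m = Matrix.fromBlocks B A D C := by
  simp [Jpm, Matrix.fromBlocks_multiply]

lemma ImmJpm_eq : Imm m * Jpm m = Matrix.fromBlocks 0 (-1) 1 0 := by
  simp [Imm, Jpm, Matrix.fromBlocks_multiply]

lemma blocks_mul_star (A B C D : Matrix (Fin m) (Fin m) ℝ) :
    Matrix.fromBlocks A B C D * star (Matrix.fromBlocks A B C D) =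
      Matrix.fromBlocks (A * star A + B * star B) (A * star C + B * star D)
        (C * star A + D * star B) (C * star C + D * star D) := by
  simp [Matrix.star_eq_conjTranspose, Matrix.fromBlocks_conjTranspose,
    Matrix.fromBlocks_transpose, Matrix.fromBlocks_multiply]

lemma Imm_mem : Imm m ∈ Matrix.orthogonalGroup (Fin m ⊕ Fin m) ℝ := by
  rw [Matrix.mem_orthogonalGroup_iff]
  show Imm m * star (Matrix.fromBlocks (-1) 0 0 1) = 1
  rw [show star (Matrix.fromBlocks (-1 : Matrix (Fin m) (Fin m) ℝ) 0 0 1)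
      = Matrix.fromBlocks (-1) 0 0 1 by
    simp [Matrix.star_eq_conjTranspose, Matrix.fromBlocks_conjTranspose,
      Matrix.fromBlocks_transpose]]
  rw [show (Matrix.fromBlocks (-1 : Matrix (Fin m) (Fin m) ℝ) 0 0 1) = Imm m from rfl,
    show Imm m * Imm m = Matrix.fromBlocks 1 0 0 1 by simp [Imm, Matrix.fromBlocks_multiply],
    Matrix.fromBlocks_one]

lemma Jpm_mem : Jpm m ∈ Matrix.orthogonalGroup (Fin m ⊕ Fin m) ℝ := by
  rw [Matrix.mem_orthogonalGroup_iff]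
  show Jpm m * star (Matrix.fromBlocks 0 1 1 0) = 1
  rw [show star (Matrix.fromBlocks (0 : Matrix (Fin m) (Fin m) ℝ) 1 1 0)
      = Matrix.fromBlocks 0 1 1 0 by
    simp [Matrix.star_eq_conjTranspose, Matrix.fromBlocks_conjTranspose,
      Matrix.fromBlocks_transpose]]
  rw [show (Matrix.fromBlocks (0 : Matrix (Fin m) (Fin m) ℝ) 1 1 0) = Jpm m from rfl,
    show Jpm m * Jpm m = Matrix.fromBlocks 1 0 0 1 by simp [Jpm, Matrix.fromBlocks_multiply],
    Matrix.fromBlocks_one]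

def ImmU (m : ℕ) : OG (Fin m ⊕ Fin m) := ⟨Imm m, Imm_mem⟩
def JpmU (m : ℕ) : OG (Fin m ⊕ Fin m) := ⟨Jpm m, Jpm_mem⟩


/-- The centralizer of `H₂ = ⟨[I_{m,m}], [J'_m]⟩` in `O(2m)/⟨-I⟩` is
`{[diag(Y,Y)·Z] : Y ∈ O(m), Z ∈ {I, I_{m,m}, J'_m, I_{m,m}J'_m}}`, i.e. the internal
product `Δ(O(m)/⟨-I⟩) × H₂`. -/
theorem centralizer_H2_orthogonal (m : ℕ) (hm : 1 ≤ m) :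
    ((Subgroup.centralizer (H2 m : Set (PO (Fin m ⊕ Fin m)))) :
        Set (PO (Fin m ⊕ Fin m))) =
      {x | ∃ Y : Matrix (Fin m) (Fin m) ℝ, Y ∈ Matrix.orthogonalGroup (Fin m) ℝ ∧
        ∃ Z ∈ ({1, Imm m, Jpm m, Imm m * Jpm m} :
            Set (Matrix (Fin m ⊕ Fin m) (Fin m ⊕ Fin m) ℝ)),
          ∃ U : OG (Fin m ⊕ Fin m),
            (QuotientGroup.mk U : PO (Fin m ⊕ Fin m)) = x ∧
            (U : Matrix (Fin m ⊕ Fin m) (Fin m ⊕ Fin m) ℝ)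
              = Matrix.fromBlocks Y 0 0 Y * Z} := by
  ext x
  obtain ⟨U, rfl⟩ := QuotientGroup.mk_surjective x
  simp only [SetLike.mem_coe, Set.mem_setOf_eq]
  constructor
  · intro hx
    have hImem : (QuotientGroup.mk (ImmU m) : PO (Fin m ⊕ Fin m)) ∈ H2 m :=
      Subgroup.subset_closure ⟨ImmU m, rfl, Or.inl rfl⟩
    have hJmem : (QuotientGroup.mk (JpmU m) : PO (Fin m ⊕ Fin m)) ∈ H2 m :=
      Subgroup.subset_closure ⟨JpmU m, rfl, Or.inr rfl⟩
    have hI := Subgroup.mem_centralizer_iff.mp hx _ hImem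
    have hJ := Subgroup.mem_centralizer_iff.mp hx _ hJmem
    rw [mk_commute_iff] at hI hJ
    obtain ⟨A, B, C, D, hu⟩ :
        ∃ A B C D, (U : Matrix (Fin m ⊕ Fin m) (Fin m ⊕ Fin m) ℝ) = Matrix.fromBlocks A B C D :=
      ⟨_, _, _, _, (Matrix.fromBlocks_toBlocks _).symm⟩
    have hIval : ((ImmU m : OG (Fin m ⊕ Fin m)) : Matrix _ _ ℝ) = Imm m := rfl
    have hJval : ((JpmU m : OG (Fin m ⊕ Fin m)) : Matrix _ _ ℝ) = Jpm m := rfl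
    rw [hIval, hu, Imm_mul_blocks, blocks_mul_Imm] at hI
    rw [hJval, hu, Jpm_mul_blocks, blocks_mul_Jpm] at hJ
    have horth := U.2
    rw [Matrix.mem_orthogonalGroup_iff, hu, ← Matrix.conjTranspose_eq_transpose_of_trivial,
      ← Matrix.star_eq_conjTranspose, blocks_mul_star, ← Matrix.fromBlocks_one,
      Matrix.fromBlocks_inj] at horth
    rcases hI with hI | hI
    · -- B = 0, C = 0
      rw [Matrix.fromBlocks_inj] at hI
      have hB : B = 0 := eq_zero_of_neg_eq_self hI.2.1
      have hC : C = 0 := eq_zero_of_neg_eq_self hI.2.2.1.symm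
      rcases hJ with hJ | hJ
      · rw [Matrix.fromBlocks_inj] at hJ
        have hDA : D = A := hJ.2.1
        refine ⟨A, ?_, 1, Set.mem_insert _ _, U, rfl, ?_⟩
        · rw [Matrix.mem_orthogonalGroup_iff]
          have := horth.1
          rw [hB] at this
          simpa [Matrix.star_eq_conjTranspose] using this
        · rw [mul_one, hu, hB, hC, hDA]
      · rw [Matrix.fromBlocks_neg, Matrix.fromBlocks_inj] at hJ
        have hDA : D = -A := hJ.2.1
        refine ⟨-A, ?_, Imm m, Set.mem_insert_iff.mpr (Or.inr (Set.mem_insert _ _)), U, rfl, ?_⟩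
        · rw [Matrix.mem_orthogonalGroup_iff]
          have := horth.1
          rw [hB] at this
          simp only [star_neg, neg_mul, mul_neg, neg_neg]
          simpa [Matrix.star_eq_conjTranspose] using this
        · rw [blocks_mul_Imm, hu, hB, hC, hDA]
          simp
    · -- A = 0, D = 0
      rw [show -(Matrix.fromBlocks (-A) B (-C) D) = Matrix.fromBlocks A (-B) C (-D) by
        rw [Matrix.fromBlocks_neg]; simp, Matrix.fromBlocks_inj] at hI
      have hA : A = 0 := eq_zero_of_neg_eq_self hI.1
      have hD : D = 0 := eq_zero_of_neg_eq_self hI.2.2.2.symm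
      rcases hJ with hJ | hJ
      · rw [Matrix.fromBlocks_inj] at hJ
        have hCB : C = B := hJ.1
        refine ⟨B, ?_, Jpm m,
          Set.mem_insert_iff.mpr (Or.inr (Set.mem_insert_iff.mpr (Or.inr (Set.mem_insert _ _)))),
          U, rfl, ?_⟩
        · rw [Matrix.mem_orthogonalGroup_iff]
          have := horth.1
          rw [hA] at this
          simpa [Matrix.star_eq_conjTranspose] using this
        · rw [blocks_mul_Jpm, hu, hA, hD, hCB]
      · rw [Matrix.fromBlocks_neg, Matrix.fromBlocks_inj] at hJ
        have hCB : C = -B := hJ.1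
        refine ⟨-B, ?_, Imm m * Jpm m,
          Set.mem_insert_iff.mpr (Or.inr (Set.mem_insert_iff.mpr
            (Or.inr (Set.mem_insert_iff.mpr (Or.inr rfl))))), U, rfl, ?_⟩
        · rw [Matrix.mem_orthogonalGroup_iff]
          have := horth.1
          rw [hA] at this
          simp only [star_neg, neg_mul, mul_neg, neg_neg]
          simpa [Matrix.star_eq_conjTranspose] using this
        · rw [ImmJpm_eq, hu, hA, hD, hCB]
          simp [Matrix.fromBlocks_multiply]
  · rintro ⟨Y, hY, Z, hZ, V, hV, hVval⟩
    rw [← hV]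
    have key : H2 m ≤ Subgroup.centralizer {(QuotientGroup.mk V : PO (Fin m ⊕ Fin m))} := by
      unfold H2
      rw [Subgroup.closure_le]
      rintro g ⟨W, rfl, hW⟩
      rw [SetLike.mem_coe, Subgroup.mem_centralizer_iff]
      rintro h hh
      rw [Set.mem_singleton_iff] at hh
      subst hh
      rw [mk_commute_iff, hVval]
      simp only [Set.mem_insert_iff, Set.mem_singleton_iff] at hZ
      rcases hW with hW | hW <;> rw [hW] <;>
        rcases hZ with rfl | rfl | rfl | rfl <;>
        simp [Imm, Jpm, Matrix.fromBlocks_multiply, Matrix.fromBlocks_neg]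
    exact Subgroup.mem_centralizer_iff.mpr fun h hh =>
      ((Subgroup.mem_centralizer_iff.mp (key hh)) _ rfl).symm

end
end

section
/- Let F be a finite abelian subgroup of Sp(n)/⟨−I⟩ such that the only X ∈ sp(n) satisfying AXA⁻¹ = X for every A ∈ Sp(n) representing an element of F is X = 0. Then every x ∈ ker m has a representative A ∈ Sp(n) with A² = I_n (equivalently, x is represented by a matrix conjugate in Sp(n) to I_{p,n−p} for some 0 ≤ p ≤ n). -/
open Matrix

noncomputable section

/-- The compact symplectic group `Sp(n)` of `n × n` quaternionic matrices `X` with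
`X X* = I`. -/
abbrev SpG (n : ℕ) := unitary (Matrix (Fin n) (Fin n) (Quaternion ℝ))

/-- `-I` as an element of `Sp(n)`. -/
def negOneSp (n : ℕ) : SpG n :=
  ⟨(-1 : Matrix (Fin n) (Fin n) (Quaternion ℝ)), by
    rw [Unitary.mem_iff]; constructor <;> simp⟩

/-- The central subgroup `⟨-I⟩` of `Sp(n)`. -/
def negSpSG (n : ℕ) : Subgroup (SpG n) := Subgroup.zpowers (negOneSp n)

instance negSpSG_normal (n : ℕ) : (negSpSG n).Normal := by
  constructor
  intro x hx g
  obtain ⟨k, rfl⟩ := Subgroup.mem_zpowers_iff.mp hx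
  have h2 : g.val * (g⁻¹ : SpG n).val = 1 := congrArg Subtype.val (mul_inv_cancel g)
  have hg : g * negOneSp n * g⁻¹ = negOneSp n := by
    apply Subtype.ext
    show g.val * (negOneSp n).val * (g⁻¹ : SpG n).val = (negOneSp n).val
    have hneg : (negOneSp n).val = -1 := rfl
    rw [hneg]
    calc g.val * (-1) * (g⁻¹ : SpG n).val
        = -(g.val * (g⁻¹ : SpG n).val) := by rw [mul_neg_one, neg_mul]
      _ = -1 := by rw [h2]
  have hmap : g * (negOneSp n) ^ k * g⁻¹ = (g * negOneSp n * g⁻¹) ^ k := by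
    have := map_zpow (MulAut.conj g) (negOneSp n) k
    simpa [MulAut.conj_apply] using this
  rw [hmap, hg]
  exact Subgroup.zpow_mem _ (Subgroup.mem_zpowers _) k

/-- The projective symplectic group `Sp(n)/⟨-I⟩`. -/
abbrev PSp (n : ℕ) := SpG n ⧸ negSpSG n

/-- If `F` is a finite abelian subgroup of `Sp(n)/⟨-I⟩` with
`sp(n)^F = 0` (here conjugation is `X ↦ A X A⁻¹ = A X A*`), then every element of `ker m`
has a representative `A ∈ Sp(n)` with `A² = I`. -/
theorem ker_pairing_has_involutive_representative_sp (n : ℕ) (hn : 1 ≤ n)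
    (F : Subgroup (PSp n))
    (habel : ∀ x ∈ F, ∀ y ∈ F, x * y = y * x)
    (hfin : (F : Set (PSp n)).Finite)
    (hcond : ∀ X : Matrix (Fin n) (Fin n) (Quaternion ℝ), X + Xᴴ = 0 →
      (∀ A : SpG n, (QuotientGroup.mk A : PSp n) ∈ F →
        A.val * X * star A.val = X) →
      X = 0) :
    ∀ x ∈ F,
      (∀ y ∈ F, ∀ A B : SpG n,
        (QuotientGroup.mk A : PSp n) = x → (QuotientGroup.mk B : PSp n) = y →
        (A * B * A⁻¹ * B⁻¹ : SpG n).val = 1) →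
      ∃ A : SpG n, (QuotientGroup.mk A : PSp n) = x ∧ A ^ 2 = 1 := by
  intro x hx hker
  obtain ⟨A, rfl⟩ := QuotientGroup.mk_surjective x
  refine ⟨A, rfl, ?_⟩
  -- every B representing an element of F commutes with A
  have hcomm : ∀ B : SpG n, (QuotientGroup.mk B : PSp n) ∈ F →
      B.val * A.val * star B.val = A.val := by
    intro B hB
    have h1 : (A * B * A⁻¹ * B⁻¹ : SpG n).val = 1 :=
      hker (QuotientGroup.mk B) hB A B rfl rfl
    have h2 : (A * B * A⁻¹ * B⁻¹ : SpG n) = 1 := Subtype.ext h1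
    have h3 : A * B = B * A :=
      commutatorElement_eq_one_iff_mul_comm.mp h2
    have h5 : B * A * B⁻¹ = A := by
      rw [← h3, mul_inv_cancel_right]
    have h6 : (B⁻¹ : SpG n).val = star B.val := rfl
    calc B.val * A.val * star B.val = (B * A * B⁻¹ : SpG n).val := by
          rw [Submonoid.coe_mul, Submonoid.coe_mul, h6]
      _ = A.val := by rw [h5]
  -- the element X = A - A* of sp(n) is fixed by conjugation by F
  set X : Matrix (Fin n) (Fin n) (Quaternion ℝ) := A.val - star A.val with hX
  have hXskew : X + Xᴴ = 0 := by
    rw [hX, ← Matrix.star_eq_conjTranspose, star_sub, star_star]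
    abel
  have hXfix : ∀ B : SpG n, (QuotientGroup.mk B : PSp n) ∈ F →
      B.val * X * star B.val = X := by
    intro B hB
    have h1 := hcomm B hB
    have h2 : B.val * star A.val * star B.val = star A.val := by
      have := congrArg star h1
      simpa [Matrix.star_mul, star_star, mul_assoc] using this
    rw [hX, mul_sub, sub_mul, h1, h2]
  have hX0 : X = 0 := hcond X hXskew hXfix
  have hAstar : A.val = star A.val := by
    have := sub_eq_zero.mp hX0
    exact this
  have hA2 : A.val * A.val = 1 := by
    nth_rewrite 1 [hAstar]
    exact (Unitary.mem_iff.mp A.property).1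
  apply Subtype.ext
  show (A ^ 2 : SpG n).val = 1
  rw [pow_two]
  exact hA2

end
end

section
/- For every n ≥ 1 and every finite abelian subgroup F of Sp(n), there exists a nonzero X ∈ sp(n) with AXA⁻¹ = X for all A ∈ F. (In the language of the paper: Sp(n) has no finite abelian subgroups satisfying the condition dim 𝔤₀^F = dim F.) -/
open Matrix

noncomputable section SpAux

local notation "ℍ" => Quaternion ℝ

/-- The embedding of `ℂ` into the quaternions (sending `i` to `i`). -/
def cToQ : ℂ →+* ℍ where
  toFun c := ⟨c.re, c.im, 0, 0⟩
  map_one' := by ext <;> simp <;> rfl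
  map_mul' c d := by ext <;> simp [Complex.mul_re, Complex.mul_im] <;> erw [QuaternionAlgebra.mk_mul_mk] <;> simp <;> ring
  map_zero' := by ext <;> simp <;> rfl
  map_add' c d := by ext <;> simp <;> erw [QuaternionAlgebra.mk_add_mk] <;> simp

lemma cToQ_comm (c d : ℂ) : cToQ c * cToQ d = cToQ d * cToQ c := by
  rw [← _root_.map_mul, ← _root_.map_mul, mul_comm]

lemma cToQ_apply (c : ℂ) : cToQ c = (⟨c.re, c.im, 0, 0⟩ : ℍ) := rfl

/-- ℂ acts on ℍ by right multiplication. -/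
instance : SMul ℂ ℍ := ⟨fun c q => q * cToQ c⟩

lemma csmul_def (c : ℂ) (q : ℍ) : c • q = q * cToQ c := rfl

instance : Module ℂ ℍ where
  one_smul q := by simp [csmul_def]
  mul_smul c d q := by simp [csmul_def, _root_.map_mul, mul_assoc, cToQ_comm c d]
  smul_zero c := by simp [csmul_def]
  smul_add c q r := by simp [csmul_def, add_mul]
  add_smul c d q := by simp [csmul_def, mul_add]
  zero_smul q := by simp [csmul_def]

/-- The quaternion `i`. -/
def qi : ℍ := ⟨0, 1, 0, 0⟩
/-- The quaternion `j`. -/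
def qj : ℍ := ⟨0, 0, 1, 0⟩

lemma qi_ne_zero : qi ≠ 0 := by
  simp [qi, Quaternion.ext_iff]
  exact fun h => one_ne_zero (α := ℝ) (congrArg QuaternionAlgebra.imI h)

lemma star_qi : star qi = -qi := by
  simp [qi, Quaternion.ext_iff]
  erw [QuaternionAlgebra.star_mk, QuaternionAlgebra.neg_mk]
  simp

lemma cToQ_comm_qi (c : ℂ) : cToQ c * qi = qi * cToQ c := by
  rw [cToQ_apply, qi]
  erw [QuaternionAlgebra.mk_mul_mk, QuaternionAlgebra.mk_mul_mk]
  ext <;> simp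

lemma span_cq : Submodule.span ℂ ({1, qj} : Set ℍ) = ⊤ := by
  rw [Submodule.eq_top_iff']
  intro q
  have : q = (⟨q.re, q.imI⟩ : ℂ) • (1 : ℍ) + (⟨q.imJ, -q.imK⟩ : ℂ) • qj := by
    rw [csmul_def, csmul_def, one_mul, cToQ_apply, cToQ_apply, qj]
    erw [QuaternionAlgebra.mk_mul_mk, QuaternionAlgebra.mk_add_mk]
    ext <;> simp
  rw [this]
  exact Submodule.add_mem _
    (Submodule.smul_mem _ _ (Submodule.subset_span (by simp)))
    (Submodule.smul_mem _ _ (Submodule.subset_span (by simp)))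

instance : Module.Finite ℂ ℍ :=
  ⟨Submodule.fg_def.mpr ⟨{1, qj}, Set.toFinite _, span_cq⟩⟩

/-- A commuting finite family of endomorphisms of a nonzero f.d. vector space over an
algebraically closed field has a common eigenvector (in any invariant nonzero subspace). -/
lemma exists_common_eigenvector {K V : Type*} [Field K] [IsAlgClosed K] [AddCommGroup V]
    [Module K V] [FiniteDimensional K V]
    (s : Finset (Module.End K V)) (hcomm : ∀ f ∈ s, ∀ g ∈ s, Commute f g)
    (W : Submodule K V) (hW : W ≠ ⊥) (hinv : ∀ f ∈ s, ∀ x ∈ W, f x ∈ W) :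
    ∃ v ∈ W, v ≠ 0 ∧ ∀ f ∈ s, ∃ c : K, f v = c • v := by
  classical
  induction s using Finset.induction generalizing W with
  | empty =>
      obtain ⟨v, hvW, hv⟩ := Submodule.exists_mem_ne_zero_of_ne_bot hW
      exact ⟨v, hvW, hv, by simp⟩
  | @insert f s hf ih =>
      have hfmem : f ∈ insert f s := Finset.mem_insert_self f s
      have hfW : ∀ x ∈ W, f x ∈ W := hinv f hfmem
      haveI : Nontrivial W := Submodule.nontrivial_iff_ne_bot.mpr hW
      obtain ⟨c, hc⟩ := Module.End.exists_eigenvalue (LinearMap.restrict f hfW)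
      obtain ⟨w, hw⟩ := hc.exists_hasEigenvector
      have hfw : f (w : V) = c • (w : V) := by
        have h1 : ((LinearMap.restrict f hfW) w : V) = f (w : V) :=
          LinearMap.restrict_coe_apply f hfW w
        rw [← h1, hw.apply_eq_smul]; rfl
      set W' : Submodule K V := W ⊓ Module.End.eigenspace f c with hW'def
      have hwW' : (w : V) ∈ W' := ⟨w.2, Module.End.mem_eigenspace_iff.mpr hfw⟩
      have hW'ne : W' ≠ ⊥ := by
        intro h
        exact hw.2 (Subtype.coe_injective (by
          simpa using (Submodule.eq_bot_iff _).mp h _ hwW'))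
      have hinv' : ∀ g ∈ s, ∀ x ∈ W', g x ∈ W' := by
        intro g hg x hx
        have hfg : f (g x) = g (f x) := by
          have := hcomm f hfmem g (Finset.mem_insert_of_mem hg)
          calc f (g x) = (f * g) x := rfl
            _ = (g * f) x := by rw [this]
            _ = g (f x) := rfl
        have hmem : g x ∈ Module.End.eigenspace f c := by
          rw [Module.End.mem_eigenspace_iff, hfg, Module.End.mem_eigenspace_iff.mp hx.2,
            _root_.map_smul]
        exact ⟨hinv g (Finset.mem_insert_of_mem hg) x hx.1, hmem⟩
      obtain ⟨v, hvW', hv0, hvs⟩ := ih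
        (fun a ha b hb => hcomm a (Finset.mem_insert_of_mem ha) b (Finset.mem_insert_of_mem hb))
        W' hW'ne hinv'
      refine ⟨v, hvW'.1, hv0, ?_⟩
      intro g hg
      rcases Finset.mem_insert.mp hg with rfl | hg'
      · exact ⟨c, Module.End.mem_eigenspace_iff.mp hvW'.2⟩
      · exact hvs g hg'

/-- Left multiplication by a quaternionic matrix as a ℂ-linear endomorphism. -/
def toEnd {n : ℕ} (A : Matrix (Fin n) (Fin n) ℍ) : Module.End ℂ (Fin n → ℍ) where
  toFun v := A *ᵥ v
  map_add' v w := Matrix.mulVec_add A v w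
  map_smul' c v := by
    funext k
    show (A *ᵥ (c • v)) k = (c • (A *ᵥ v)) k
    simp only [Matrix.mulVec, dotProduct, Pi.smul_apply, csmul_def,
      Finset.sum_mul, mul_assoc]

lemma toEnd_apply {n : ℕ} (A : Matrix (Fin n) (Fin n) ℍ) (v : Fin n → ℍ) :
    toEnd A v = A *ᵥ v := rfl

lemma qcoe_sum {ι : Type*} (s : Finset ι) (f : ι → ℝ) :
    ((∑ i ∈ s, f i : ℝ) : Quaternion ℝ) = ∑ i ∈ s, ((f i : ℝ) : Quaternion ℝ) := by
  classical
  induction s using Finset.induction with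
  | empty => simp
  | insert _ _ h ih => rw [Finset.sum_insert h, Finset.sum_insert h, Quaternion.coe_add, ih]

/-- Unitary matrices preserve the quaternionic hermitian product. -/
lemma dot_preserved {n : ℕ} (A : Matrix (Fin n) (Fin n) ℍ)
    (hA : A ∈ unitary (Matrix (Fin n) (Fin n) ℍ)) (v : Fin n → ℍ) :
    star (A *ᵥ v) ⬝ᵥ (A *ᵥ v) = star v ⬝ᵥ v := by
  have h1 : Aᴴ * A = 1 := by
    rw [← Matrix.star_eq_conjTranspose]
    exact Unitary.star_mul_self_of_mem hA
  rw [Matrix.star_mulVec, Matrix.dotProduct_mulVec, Matrix.vecMul_vecMul, h1,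
    Matrix.vecMul_one]

lemma conj_entry {n : ℕ} (A : Matrix (Fin n) (Fin n) ℍ) (v : Fin n → ℍ) (k l : Fin n) :
    (A * (Matrix.of fun p q => v p * qi * star (v q)) * Aᴴ) k l
      = (A *ᵥ v) k * (qi * star ((A *ᵥ v) l)) := by
  simp only [Matrix.mul_apply, Matrix.of_apply, Matrix.conjTranspose_apply, Matrix.mulVec,
    dotProduct, Finset.sum_mul, Finset.mul_sum, star_sum, StarMul.star_mul, mul_assoc]

end SpAux

/-- For every `n ≥ 1` and every finite abelian subgroup `F` of `Sp(n)`,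
there is a nonzero `X ∈ sp(n)` with `A X A⁻¹ = X` (i.e. `A X A* = X`) for all `A ∈ F`:
`Sp(n)` has no finite abelian subgroup satisfying the condition `dim 𝔤₀^F = dim F`. -/
theorem sp_no_finite_abelian_subgroup_with_condition (n : ℕ) (hn : 1 ≤ n)
    (F : Subgroup (unitary (Matrix (Fin n) (Fin n) (Quaternion ℝ))))
    (habel : ∀ x ∈ F, ∀ y ∈ F, x * y = y * x)
    (hfin : (F : Set (unitary (Matrix (Fin n) (Fin n) (Quaternion ℝ)))).Finite) :
    ∃ X : Matrix (Fin n) (Fin n) (Quaternion ℝ), X ≠ 0 ∧ X + Xᴴ = 0 ∧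
      ∀ A ∈ F, A.val * X * star A.val = X := by
  classical
  haveI : Nonempty (Fin n) := ⟨⟨0, hn⟩⟩
  -- the finite commuting family of ℂ-linear endomorphisms
  set s : Finset (Module.End ℂ (Fin n → Quaternion ℝ)) :=
    (hfin.image (fun A => toEnd A.val)).toFinset with hs
  have hmem : ∀ f ∈ s, ∃ A ∈ F, f = toEnd A.val := by
    intro f hf
    rw [hs, Set.Finite.mem_toFinset] at hf
    obtain ⟨A, hA, rfl⟩ := hf
    exact ⟨A, hA, rfl⟩
  have hcomm : ∀ f ∈ s, ∀ g ∈ s, Commute f g := by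
    intro f hf g hg
    obtain ⟨A, hA, rfl⟩ := hmem f hf
    obtain ⟨B, hB, rfl⟩ := hmem g hg
    have hab : A.val * B.val = B.val * A.val :=
      congrArg Subtype.val (habel A hA B hB)
    apply LinearMap.ext
    intro v
    show toEnd A.val (toEnd B.val v) = toEnd B.val (toEnd A.val v)
    simp only [toEnd_apply, Matrix.mulVec_mulVec, hab]
  obtain ⟨v, -, hv0, heig⟩ := exists_common_eigenvector s hcomm ⊤
    (by simp) (fun f _ x _ => Submodule.mem_top)
  -- the invariant skew matrix
  refine ⟨Matrix.of fun p q => v p * qi * star (v q), ?_, ?_, ?_⟩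
  · -- nonzero
    obtain ⟨k, hk⟩ := Function.ne_iff.mp hv0
    intro h
    have := congrFun (congrFun h k) k
    simp only [Matrix.of_apply, Matrix.zero_apply] at this
    exact (mul_ne_zero (mul_ne_zero hk qi_ne_zero) (star_ne_zero.mpr hk)) this
  · -- skew
    apply Matrix.ext
    intro k l
    show v k * qi * star (v l) + star (v l * qi * star (v k)) = 0
    rw [StarMul.star_mul, StarMul.star_mul, star_star, star_qi]
    simp [mul_assoc]
  · -- invariance
    intro A hA
    have hAs : toEnd A.val ∈ s := by
      rw [hs, Set.Finite.mem_toFinset]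
      exact ⟨A, hA, rfl⟩
    obtain ⟨c, hc⟩ := heig _ hAs
    rw [toEnd_apply] at hc
    -- the eigenvalue has norm 1
    have hnorm : Quaternion.normSq (cToQ c) = 1 := by
      have hdot := dot_preserved A.val A.property v
      rw [hc] at hdot
      have lhs : star (c • v) ⬝ᵥ (c • v)
          = (((∑ k, Quaternion.normSq (v k)) * Quaternion.normSq (cToQ c) : ℝ) : Quaternion ℝ) := by
        simp only [dotProduct, Pi.star_apply, Pi.smul_apply, csmul_def,
          StarMul.star_mul]
        have hterm : ∀ k : Fin n, star (cToQ c) * star (v k) * (v k * cToQ c)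
            = ((Quaternion.normSq (v k) : ℝ) : Quaternion ℝ) * ((Quaternion.normSq (cToQ c) : ℝ) : Quaternion ℝ) := by
          intro k
          rw [mul_assoc (star (cToQ c)), ← mul_assoc (star (v k)), Quaternion.star_mul_self,
            Quaternion.coe_commutes, ← mul_assoc, Quaternion.star_mul_self]
          exact Quaternion.coe_commutes _ _
        rw [Finset.sum_congr rfl (fun k _ => hterm k), ← Finset.sum_mul, Quaternion.coe_mul,
          qcoe_sum]
      have rhs : star v ⬝ᵥ v = (((∑ k, Quaternion.normSq (v k)) : ℝ) : Quaternion ℝ) := by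
        simp only [dotProduct, Pi.star_apply, Quaternion.star_mul_self]
        rw [qcoe_sum]
      rw [lhs, rhs] at hdot
      have heq : (∑ k, Quaternion.normSq (v k)) * Quaternion.normSq (cToQ c)
          = ∑ k, Quaternion.normSq (v k) := Quaternion.coe_injective hdot
      have hpos : (0 : ℝ) < ∑ k, Quaternion.normSq (v k) := by
        obtain ⟨k, hk⟩ := Function.ne_iff.mp hv0
        have hk' : v k ≠ 0 := hk
        have h1 : (0 : ℝ) < Quaternion.normSq (v k) :=
          lt_of_le_of_ne Quaternion.normSq_nonneg
            (Ne.symm (Quaternion.normSq_ne_zero.mpr hk'))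
        exact lt_of_lt_of_le h1
          (Finset.single_le_sum (f := fun i => Quaternion.normSq (v i)) (fun i _ => Quaternion.normSq_nonneg) (Finset.mem_univ k))
      exact mul_left_cancel₀ (ne_of_gt hpos) (heq.trans (mul_one _).symm)
    have hcc : cToQ c * star (cToQ c) = 1 := by
      rw [Quaternion.self_mul_star, hnorm]; norm_num
    have key : cToQ c * (qi * star (cToQ c)) = qi := by
      rw [← mul_assoc, cToQ_comm_qi, mul_assoc, hcc, mul_one]
    rw [Matrix.star_eq_conjTranspose]
    apply Matrix.ext
    intro k l
    rw [conj_entry, hc]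
    show v k * cToQ c * (qi * star (v l * cToQ c)) = v k * qi * star (v l)
    rw [StarMul.star_mul]
    simp only [← mul_assoc]
    have h1 : v k * cToQ c * qi = v k * qi * cToQ c := by
      rw [mul_assoc, cToQ_comm_qi, ← mul_assoc]
    rw [h1, mul_assoc (v k * qi) (cToQ c) (star (cToQ c)), hcc, mul_one]
end

section
/- Let F be an abelian subgroup of G = PU(n) ⋊ ⟨τ₀⟩ that is not contained in PU(n), and let H_F = F ∩ PU(n). Then the commutator pairing m of the abelian subgroup H_F of PU(n) takes values in {1, −1}, and for every u ∈ F \ H_F one has u² ∈ ker m = {x ∈ H_F : m(x,y) = 1 for all y ∈ H_F}. -/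
open Matrix

noncomputable section

variable (ι : Type) [Fintype ι] [DecidableEq ι]

variable {ι}

lemma conjTranspose_map_conj (A : Matrix ι ι ℂ) :
    (A.map (starRingEnd ℂ))ᴴ = Aᵀ := by
  ext i j
  simp [Matrix.conjTranspose_apply, Matrix.map_apply]

/-- Entrywise complex conjugation on the unitary group. -/
def conjUG (A : UG ι) : UG ι :=
  ⟨(A : Matrix ι ι ℂ).map (starRingEnd ℂ), by
    rw [Matrix.mem_unitaryGroup_iff]
    have h1 : ((A : Matrix ι ι ℂ) * star (A : Matrix ι ι ℂ)).map (starRingEnd ℂ)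
        = (A : Matrix ι ι ℂ).map (starRingEnd ℂ)
          * (star (A : Matrix ι ι ℂ)).map (starRingEnd ℂ) :=
      Matrix.map_mul
    have hA : (A : Matrix ι ι ℂ) * star (A : Matrix ι ι ℂ) = 1 :=
      Matrix.mem_unitaryGroup_iff.mp A.2
    rw [hA] at h1
    have h2 : ((1 : Matrix ι ι ℂ)).map (starRingEnd ℂ) = 1 := by
      ext i j; simp [Matrix.map_apply, Matrix.one_apply, apply_ite]
    have h3 : star ((A : Matrix ι ι ℂ).map (starRingEnd ℂ))
        = (star (A : Matrix ι ι ℂ)).map (starRingEnd ℂ) := by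
      ext i j
      simp [Matrix.star_eq_conjTranspose, Matrix.conjTranspose_apply, Matrix.map_apply]
    rw [h3, ← h1, h2]⟩

@[simp] lemma conjUG_conjUG (A : UG ι) : conjUG (conjUG A) = A := by
  apply Subtype.ext
  show ((A : Matrix ι ι ℂ).map (starRingEnd ℂ)).map (starRingEnd ℂ) = (A : Matrix ι ι ℂ)
  ext i j
  simp [Matrix.map_apply]

/-- Entrywise complex conjugation as an automorphism of the unitary group. -/
def conjUGE : UG ι ≃* UG ι where
  toFun := conjUG
  invFun := conjUG
  left_inv := conjUG_conjUG
  right_inv := conjUG_conjUG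
  map_mul' A B := by
    apply Subtype.ext
    show ((A * B : UG ι) : Matrix ι ι ℂ).map (starRingEnd ℂ)
        = (A : Matrix ι ι ℂ).map (starRingEnd ℂ) * (B : Matrix ι ι ℂ).map (starRingEnd ℂ)
    rw [Matrix.UnitaryGroup.mul_val]
    exact Matrix.map_mul

variable (ι)

lemma scalarSG_le_comap_conjUGE :
    scalarSG ι ≤ (scalarSG ι).comap (conjUGE : UG ι ≃* UG ι).toMonoidHom := by
  rintro A ⟨a, ha, hA⟩
  refine ⟨starRingEnd ℂ a, by simpa using ha, ?_⟩
  show ((A : Matrix ι ι ℂ).map (starRingEnd ℂ)) = _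
  rw [hA]
  ext i j
  by_cases h : i = j <;>
    simp [Matrix.map_apply, Matrix.smul_apply, Matrix.one_apply, h]

/-- The complex conjugation automorphism `τ₀` of `PU(ι)`. -/
def tauPU : PU ι ≃* PU ι where
  toFun := QuotientGroup.map (scalarSG ι) (scalarSG ι) (conjUGE : UG ι ≃* UG ι).toMonoidHom
    (scalarSG_le_comap_conjUGE ι)
  invFun := QuotientGroup.map (scalarSG ι) (scalarSG ι) (conjUGE : UG ι ≃* UG ι).toMonoidHom
    (scalarSG_le_comap_conjUGE ι)
  left_inv := by
    intro x
    induction x using QuotientGroup.induction_on with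
    | H A => rw [QuotientGroup.map_mk, QuotientGroup.map_mk]
             exact congrArg _ (conjUG_conjUG A)
  right_inv := by
    intro x
    induction x using QuotientGroup.induction_on with
    | H A => rw [QuotientGroup.map_mk, QuotientGroup.map_mk]
             exact congrArg _ (conjUG_conjUG A)
  map_mul' := map_mul _


end

noncomputable section

variable (ι : Type) [Fintype ι] [DecidableEq ι]

lemma tauPU_mul_tauPU : (tauPU ι) * (tauPU ι) = 1 :=
  DFunLike.ext _ _ fun x => by
    rw [MulAut.mul_apply, MulAut.one_apply]
    exact (tauPU ι).left_inv x

/-- The action of `⟨τ₀⟩ ≅ ℤ/2ℤ` on `PU(ι)` by complex conjugation. -/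
def actPU : Multiplicative (ZMod 2) →* MulAut (PU ι) where
  toFun x := (tauPU ι) ^ (Multiplicative.toAdd x).val
  map_one' := by
    show (tauPU ι) ^ (Multiplicative.toAdd (1 : Multiplicative (ZMod 2))).val = 1
    simp
  map_mul' a b := by
    show (tauPU ι) ^ (Multiplicative.toAdd (a * b)).val
        = (tauPU ι) ^ (Multiplicative.toAdd a).val * (tauPU ι) ^ (Multiplicative.toAdd b).val
    have h2 : (tauPU ι) ^ 2 = 1 := by rw [pow_two]; exact tauPU_mul_tauPU ι
    have hab : (Multiplicative.toAdd (a * b))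
        = Multiplicative.toAdd a + Multiplicative.toAdd b := rfl
    rw [hab, ZMod.val_add, ← pow_eq_pow_mod _ h2, pow_add]

/-- The group `PU(ι) ⋊ ⟨τ₀⟩`. -/
abbrev GA := SemidirectProduct (PU ι) (Multiplicative (ZMod 2)) (actPU ι)

end

section AuxHelpers

variable {ι : Type} [Fintype ι] [DecidableEq ι]

lemma aux_scalar_central {s : UG ι} (hs : s ∈ scalarSG ι) (g : UG ι) :
    g * s = s * g := by
  obtain ⟨c, -, hc⟩ := hs
  apply Subtype.ext
  show (g : Matrix ι ι ℂ) * (s : Matrix ι ι ℂ) = (s : Matrix ι ι ℂ) * (g : Matrix ι ι ℂ)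
  rw [hc]
  simp [mul_smul_comm, smul_mul_assoc]

lemma aux_conjUG_val (A : UG ι) :
    ((conjUG A : UG ι) : Matrix ι ι ℂ) = (A : Matrix ι ι ℂ).map (starRingEnd ℂ) := rfl

lemma aux_map_scalar (c : ℂ) :
    (c • (1 : Matrix ι ι ℂ)).map (starRingEnd ℂ) = (starRingEnd ℂ c) • 1 := by
  ext i j
  by_cases h : i = j <;>
    simp [Matrix.map_apply, Matrix.smul_apply, Matrix.one_apply, h]

lemma aux_conjUG_mem_scalar {s : UG ι} (hs : s ∈ scalarSG ι) : conjUG s ∈ scalarSG ι := by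
  obtain ⟨c, hc, hval⟩ := hs
  exact ⟨starRingEnd ℂ c, by simpa using hc, by rw [aux_conjUG_val, hval, aux_map_scalar]⟩

lemma aux_scalar_mul_conjUG {s : UG ι} (hs : s ∈ scalarSG ι) : s * conjUG s = 1 := by
  obtain ⟨c, hc, hval⟩ := hs
  apply Subtype.ext
  show (s : Matrix ι ι ℂ) * ((conjUG s : UG ι) : Matrix ι ι ℂ) = 1
  rw [aux_conjUG_val, hval, aux_map_scalar]
  have h1 : c * starRingEnd ℂ c = 1 := by
    rw [Complex.mul_conj]
    norm_cast
    rw [Complex.normSq_eq_norm_sq, hc, one_pow]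
  rw [smul_mul_smul_comm, h1, one_smul, mul_one]

lemma aux_conjUG_mul (A B : UG ι) : conjUG (A * B) = conjUG A * conjUG B :=
  map_mul (conjUGE : UG ι ≃* UG ι) A B

lemma aux_conjUG_inv (A : UG ι) : conjUG A⁻¹ = (conjUG A)⁻¹ :=
  map_inv (conjUGE : UG ι ≃* UG ι) A

lemma aux_tauPU_mk (A : UG ι) :
    tauPU ι (QuotientGroup.mk A) = QuotientGroup.mk (conjUG A) := rfl

lemma aux_conj_scalar (a s : UG ι) (hs : ∀ g : UG ι, g * s = s * g) (x : UG ι) :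
    (a * s) * x * (a * s)⁻¹ = a * x * a⁻¹ := by
  have h1 : s * x * s⁻¹ = x := by rw [← hs x, mul_inv_cancel_right]
  calc (a * s) * x * (a * s)⁻¹ = a * (s * x * s⁻¹) * a⁻¹ := by group
    _ = a * x * a⁻¹ := by rw [h1]

lemma aux_comm_mul_scalar (a b s t : UG ι)
    (hs : ∀ g : UG ι, g * s = s * g) (ht : ∀ g : UG ι, g * t = t * g) :
    (a * s) * (b * t) * (a * s)⁻¹ * (b * t)⁻¹ = a * b * a⁻¹ * b⁻¹ := by
  calc (a * s) * (b * t) * (a * s)⁻¹ * (b * t)⁻¹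
      = ((a * s) * (b * t) * (a * s)⁻¹) * (b * t)⁻¹ := by group
    _ = (a * (b * t) * a⁻¹) * (b * t)⁻¹ := by rw [aux_conj_scalar a s hs]
    _ = a * b * (t * a⁻¹) * (t⁻¹ * b⁻¹) := by group
    _ = a * b * (a⁻¹ * t) * (t⁻¹ * b⁻¹) := by rw [ht a⁻¹]
    _ = a * b * a⁻¹ * b⁻¹ := by group

lemma aux_eq_mul_scalar_of_mk_eq {A B : UG ι}
    (h : (QuotientGroup.mk A : PU ι) = QuotientGroup.mk B) :
    ∃ s ∈ scalarSG ι, B = A * s := by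
  refine ⟨A⁻¹ * B, QuotientGroup.eq.mp h, by group⟩

end AuxHelpers

/-- For an abelian subgroup `F` of `G = PU(n) ⋊ ⟨τ₀⟩` not contained in
`PU(n)`, the commutator pairing `m` of `H_F = F ∩ PU(n)` takes values in `{1, -1}`, and
`u² ∈ ker m` for every `u ∈ F \ H_F`. -/
theorem twisted_pairing_values (n : ℕ) (hn : 1 ≤ n)
    (F : Subgroup (GA (Fin n)))
    (habel : ∀ x ∈ F, ∀ y ∈ F, x * y = y * x)
    (hout : ∃ u ∈ F, u.right ≠ 1) :
    (∀ x ∈ F, x.right = 1 → ∀ y ∈ F, y.right = 1 →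
      ∀ A B : UG (Fin n),
        (QuotientGroup.mk A : PU (Fin n)) = x.left →
        (QuotientGroup.mk B : PU (Fin n)) = y.left →
        ((A * B * A⁻¹ * B⁻¹ : UG (Fin n)) : Matrix (Fin n) (Fin n) ℂ)
            = (1 : Matrix (Fin n) (Fin n) ℂ) ∨
        ((A * B * A⁻¹ * B⁻¹ : UG (Fin n)) : Matrix (Fin n) (Fin n) ℂ)
            = -(1 : Matrix (Fin n) (Fin n) ℂ)) ∧
    (∀ u ∈ F, u.right ≠ 1 →
      (u ^ 2).right = 1 ∧
      (∀ y ∈ F, y.right = 1 →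
        ∀ A B : UG (Fin n),
          (QuotientGroup.mk A : PU (Fin n)) = (u ^ 2).left →
          (QuotientGroup.mk B : PU (Fin n)) = y.left →
          ((A * B * A⁻¹ * B⁻¹ : UG (Fin n)) : Matrix (Fin n) (Fin n) ℂ)
              = (1 : Matrix (Fin n) (Fin n) ℂ))) := by
  -- the action of a nontrivial right component is tauPU
  have htau : ∀ t : Multiplicative (ZMod 2), t ≠ 1 → actPU (Fin n) t = tauPU (Fin n) := by
    intro t ht
    have h1 : Multiplicative.toAdd t = 1 := by revert ht; revert t; decide
    show (tauPU (Fin n)) ^ (Multiplicative.toAdd t).val = tauPU (Fin n)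
    rw [h1]
    norm_num [ZMod.val_one]
  -- commuting relation at the PU level
  have keyconj : ∀ u ∈ F, u.right ≠ 1 → ∀ U : UG (Fin n),
      (QuotientGroup.mk U : PU (Fin n)) = u.left →
      ∀ x ∈ F, x.right = 1 → ∀ A : UG (Fin n),
      (QuotientGroup.mk A : PU (Fin n)) = x.left →
      ∃ s ∈ scalarSG (Fin n), conjUG A = U⁻¹ * A * U * s := by
    intro u hu hur U hU x hx hxr A hA
    have h := congrArg SemidirectProduct.left (habel u hu x hx)
    rw [SemidirectProduct.mul_left, SemidirectProduct.mul_left, hxr, _root_.map_one,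
      MulAut.one_apply, htau u.right hur] at h
    -- h : u.left * tauPU x.left = x.left * u.left
    rw [← hU, ← hA, aux_tauPU_mk, ← QuotientGroup.mk_mul, ← QuotientGroup.mk_mul] at h
    obtain ⟨s, hs, hrel⟩ := aux_eq_mul_scalar_of_mk_eq h.symm
    -- hrel : U * conjUG A = (A * U) * s
    refine ⟨s, hs, ?_⟩
    have := congrArg (fun g => U⁻¹ * g) hrel
    simpa [mul_assoc] using this
  constructor
  · -- part 1
    intro x hx hxr y hy hyr A B hA hB
    obtain ⟨u, hu, hur⟩ := hout
    obtain ⟨U, hU⟩ := QuotientGroup.mk_surjective u.left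
    -- x.left and y.left commute
    have h := congrArg SemidirectProduct.left (habel x hx y hy)
    rw [SemidirectProduct.mul_left, SemidirectProduct.mul_left, hxr, hyr, _root_.map_one,
      MulAut.one_apply, MulAut.one_apply] at h
    have hmk : (QuotientGroup.mk (A * B) : PU (Fin n)) = QuotientGroup.mk (B * A) := by
      rw [QuotientGroup.mk_mul, QuotientGroup.mk_mul, hA, hB, h]
    obtain ⟨s, hs, hrel⟩ := aux_eq_mul_scalar_of_mk_eq hmk
    -- the commutator equals s⁻¹, a scalar
    have hCval : A * B * A⁻¹ * B⁻¹ = s⁻¹ := by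
      have hcen := aux_scalar_central ((scalarSG (Fin n)).inv_mem hs) (A * B)
      calc A * B * A⁻¹ * B⁻¹ = (A * B) * (B * A)⁻¹ := by group
        _ = (A * B) * s⁻¹ * (A * B)⁻¹ := by rw [hrel]; group
        _ = s⁻¹ * (A * B) * (A * B)⁻¹ := by rw [hcen]
        _ = s⁻¹ := by group
    have hCmem : A * B * A⁻¹ * B⁻¹ ∈ scalarSG (Fin n) := by
      rw [hCval]; exact (scalarSG (Fin n)).inv_mem hs
    obtain ⟨c, hc, hcval⟩ := id hCmem
    -- conjugation invariance gives conj c = c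
    obtain ⟨s₁, hs₁, hA1⟩ := keyconj u hu hur U hU x hx hxr A hA
    obtain ⟨s₂, hs₂, hB1⟩ := keyconj u hu hur U hU y hy hyr B hB
    have hCconj : conjUG (A * B * A⁻¹ * B⁻¹) = A * B * A⁻¹ * B⁻¹ := by
      have e1 : conjUG (A * B * A⁻¹ * B⁻¹)
          = conjUG A * conjUG B * (conjUG A)⁻¹ * (conjUG B)⁻¹ := by
        rw [aux_conjUG_mul, aux_conjUG_mul, aux_conjUG_mul, aux_conjUG_inv, aux_conjUG_inv]
      rw [e1, hA1, hB1,
        aux_comm_mul_scalar (U⁻¹ * A * U) (U⁻¹ * B * U) s₁ s₂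
          (aux_scalar_central hs₁) (aux_scalar_central hs₂)]
      have e2 : (U⁻¹ * A * U) * (U⁻¹ * B * U) * (U⁻¹ * A * U)⁻¹ * (U⁻¹ * B * U)⁻¹
          = U⁻¹ * ((A * B * A⁻¹ * B⁻¹) * U) := by group
      rw [e2, ← aux_scalar_central hCmem U]
      group
    -- extract conj c = c
    have hval : ((conjUG (A * B * A⁻¹ * B⁻¹) : UG (Fin n)) : Matrix (Fin n) (Fin n) ℂ)
        = ((A * B * A⁻¹ * B⁻¹ : UG (Fin n)) : Matrix (Fin n) (Fin n) ℂ) := by rw [hCconj]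
    rw [aux_conjUG_val, hcval, aux_map_scalar] at hval
    have i0 : Fin n := ⟨0, hn⟩
    have hcc : starRingEnd ℂ c = c := by
      have := congrFun (congrFun hval i0) i0
      simpa [Matrix.smul_apply, Matrix.one_apply] using this
    have hpm : c = 1 ∨ c = -1 := by
      have hre : c = (c.re : ℂ) := (Complex.conj_eq_iff_re.mp hcc).symm
      rw [hre] at hc
      rw [Complex.norm_real] at hc
      rcases (abs_eq (by norm_num : (0:ℝ) ≤ 1)).mp hc with h1 | h1 <;>
        [left; right] <;> rw [hre, h1] <;> norm_num
    rcases hpm with h1 | h1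
    · left; rw [hcval, h1, one_smul]
    · right; rw [hcval, h1]; simp
  · -- part 2
    intro u hu hur
    obtain ⟨U, hU⟩ := QuotientGroup.mk_surjective u.left
    have hsqr : (u ^ 2).right = 1 := by
      rw [pow_two, SemidirectProduct.mul_right]
      exact (by decide : ∀ t : Multiplicative (ZMod 2), t * t = 1) u.right
    refine ⟨hsqr, ?_⟩
    intro y hy hyr A B hA hB
    -- U * conjUG U is a lift of (u^2).left
    have hW : (QuotientGroup.mk (U * conjUG U) : PU (Fin n)) = (u ^ 2).left := by
      rw [pow_two, SemidirectProduct.mul_left, htau u.right hur, QuotientGroup.mk_mul, hU,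
        ← hU, aux_tauPU_mk]
    obtain ⟨sA, hsA, hAW⟩ := aux_eq_mul_scalar_of_mk_eq (hW.trans hA.symm)
    obtain ⟨s, hs, hconjB⟩ := keyconj u hu hur U hU y hy hyr B hB
    -- W commutes with B
    have hWB : (U * conjUG U) * B = B * (U * conjUG U) := by
      have h1 := congrArg conjUG hconjB
      rw [conjUG_conjUG, aux_conjUG_mul, aux_conjUG_mul, aux_conjUG_mul, aux_conjUG_inv,
        hconjB] at h1
      -- h1 : B = (conjUG U)⁻¹ * (U⁻¹ * B * U * s) * conjUG U * conjUG s
      have h2 : (conjUG U)⁻¹ * (U⁻¹ * B * U * s) * conjUG U * conjUG s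
          = (U * conjUG U)⁻¹ * B * (U * conjUG U) := by
        calc (conjUG U)⁻¹ * (U⁻¹ * B * U * s) * conjUG U * conjUG s
            = (conjUG U)⁻¹ * U⁻¹ * B * U * (s * conjUG U) * conjUG s := by group
          _ = (conjUG U)⁻¹ * U⁻¹ * B * U * (conjUG U * s) * conjUG s := by
              rw [← aux_scalar_central hs (conjUG U)]
          _ = (U * conjUG U)⁻¹ * B * (U * conjUG U) * (s * conjUG s) := by group
          _ = (U * conjUG U)⁻¹ * B * (U * conjUG U) := by
              rw [aux_scalar_mul_conjUG hs, mul_one]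
      rw [h2] at h1
      calc (U * conjUG U) * B
          = (U * conjUG U) * ((U * conjUG U)⁻¹ * B * (U * conjUG U)) := by rw [← h1]
        _ = B * (U * conjUG U) := by group
    -- conclude
    have hcomm : A * B * A⁻¹ * B⁻¹ = 1 := by
      rw [hAW]
      have := aux_comm_mul_scalar (U * conjUG U) B sA 1
        (aux_scalar_central hsA) (fun g => by rw [mul_one, one_mul])
      rw [mul_one] at this
      rw [this]
      calc (U * conjUG U) * B * (U * conjUG U)⁻¹ * B⁻¹
          = B * (U * conjUG U) * (U * conjUG U)⁻¹ * B⁻¹ := by rw [hWB]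
        _ = 1 := by group
    have hfin : ((A * B * A⁻¹ * B⁻¹ : UG (Fin n)) : Matrix (Fin n) (Fin n) ℂ)
        = ((1 : UG (Fin n)) : Matrix (Fin n) (Fin n) ℂ) := by rw [hcomm]
    simpa using hfin
end
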